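/- arXiv:1910.02819 — 6 statements merged into one kernel-verified Lean document; each statement's English description precedes it below -/
import Mathlib

section
/- Every Eulerian trail of the graph F_6 contains a subcycle of length at most 4; in particular, F_6 admits no 4-locally self-avoiding Eulerian trail. -/
open SimpleGraph

namespace Quartic

variable {V : Type*}

/-- The vertex list `l` (the support of a trail `v_0 v_1 … v_m`) has a subcycle of
length `t` beginning at index `i`: the entries at positions `i` and `i + t` coincide
and the entries at positions `i, …, i + t - 1` are pairwise distinct.  Only short
lengths `1 ≤ t ≤ 4` are recorded. -/
def ShortSubcycleAt (l : List V) (i t : ℕ) : Prop :=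
  1 ≤ t ∧ t ≤ 4 ∧ i + t < l.length ∧
    l[i]? = l[i + t]? ∧
    ∀ p q, i ≤ p → p < q → q < i + t → l[p]? ≠ l[q]?

/-- A trail (given as a walk) is 4-locally self-avoiding if it has no subcycle of
length at most 4. -/
def TrailLSA4 {G : SimpleGraph V} {u v : V} (W : G.Walk u v) : Prop :=
  ¬ ∃ i t, ShortSubcycleAt W.support i t

/-- Cyclic analogue of `ShortSubcycleAt`, used for circuits: here `l` is the support
of a closed walk with the repeated final vertex removed, and indices are taken modulo
`l.length`, so that subcycles may wrap around the base point. -/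
def CyclicShortSubcycleAt (l : List V) (i t : ℕ) : Prop :=
  1 ≤ t ∧ t ≤ 4 ∧ t ≤ l.length ∧
    l[i % l.length]? = l[(i + t) % l.length]? ∧
    ∀ p q, p < q → q < t →
      l[(i + p) % l.length]? ≠ l[(i + q) % l.length]?

/-- A circuit (closed walk) is 4-locally self-avoiding if it has no cyclic subcycle of
length at most 4. -/
def CircuitLSA4 {G : SimpleGraph V} {u : V} (W : G.Walk u u) : Prop :=
  ¬ ∃ i t, CyclicShortSubcycleAt W.support.dropLast i t

/-- `W` is an Eulerian trail of its graph: a trail traversing every edge exactly once. -/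
def IsEulerianTrail {G : SimpleGraph V} {u v : V} (W : G.Walk u v) : Prop :=
  W.IsTrail ∧ ∀ e, e ∈ G.edgeSet ↔ e ∈ W.edges

/-- `G` admits a 4-locally self-avoiding Eulerian circuit. -/
def HasLSA4EulerianCircuit (G : SimpleGraph V) : Prop :=
  ∃ (u : V) (W : G.Walk u u), IsEulerianTrail W ∧ CircuitLSA4 W

/-- An `L`-path-chain from `u` to `w` in `G`: a sequence of `k` pairwise edge-disjoint
paths covering `E(G)`, the `i`-th of length `ℓ i`, where the first path starts at `u`,
the last path ends at `w`, and consecutive paths share their endpoint. -/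
def PathChain (G : SimpleGraph V) (u w : V) {k : ℕ} (ℓ : Fin k → ℕ) : Prop :=
  ∃ (v : Fin (k + 1) → V) (P : ∀ i : Fin k, G.Walk (v i.castSucc) (v i.succ)),
    v 0 = u ∧ v (Fin.last k) = w ∧
    (∀ i, (P i).IsPath) ∧ (∀ i, (P i).length = ℓ i) ∧
    (∀ i j, i ≠ j → ∀ e, e ∈ (P i).edges → e ∉ (P j).edges) ∧
    (∀ e, e ∈ G.edgeSet → ∃ i, e ∈ (P i).edges)

/-- The graph `F₆` on vertices `x = 0`, `a = 1`, `b = 2`, `c = 3`, `d = 4`, `y = 5`,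
with the 11 edges `xa, xb, xc, ya, yc, yd, ab, bc, cd, ad, bd`. -/
def F6 : SimpleGraph (Fin 6) :=
  SimpleGraph.fromEdgeSet
    {s((0 : Fin 6), 1), s((0 : Fin 6), 2), s((0 : Fin 6), 3),
     s((5 : Fin 6), 1), s((5 : Fin 6), 3), s((5 : Fin 6), 4),
     s((1 : Fin 6), 2), s((2 : Fin 6), 3), s((3 : Fin 6), 4),
     s((1 : Fin 6), 4), s((2 : Fin 6), 4)}

/-- The octahedron `K_{2,2,2}`, with parts `{0,3}`, `{1,4}`, `{2,5}`. -/
def Octahedron : SimpleGraph (Fin 6) :=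
  SimpleGraph.fromRel (fun i j => (i : ℕ) % 3 ≠ (j : ℕ) % 3)

/-- The `n`-antiprism, on vertices `u i = (0, i)` and `w i = (1, i)` for `i : ZMod n`,
with edges `u i — u (i+1)`, `w i — w (i+1)`, `u i — w i` and `u (i+1) — w i`. -/
def Antiprism (n : ℕ) : SimpleGraph (Fin 2 × ZMod n) :=
  SimpleGraph.fromRel (fun p q =>
    (p.1 = q.1 ∧ q.2 = p.2 + 1) ∨
    (p.1 = 0 ∧ q.1 = 1 ∧ (q.2 = p.2 ∨ p.2 = q.2 + 1)))

/-- The graph `G₇` on vertices `x = 0`, `y = 1`, `a = 2`, `b = 3`, `c = 4`, `d = 5`,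
`e = 6`, with the 13 edges `xa, xd, xy, yb, ye, ab, ac, ad, bc, be, cd, ce, de`. -/
def G7 : SimpleGraph (Fin 7) :=
  SimpleGraph.fromEdgeSet
    {s((0 : Fin 7), 2), s((0 : Fin 7), 5), s((0 : Fin 7), 1),
     s((1 : Fin 7), 3), s((1 : Fin 7), 6),
     s((2 : Fin 7), 3), s((2 : Fin 7), 4), s((2 : Fin 7), 5),
     s((3 : Fin 7), 4), s((3 : Fin 7), 6),
     s((4 : Fin 7), 5), s((4 : Fin 7), 6), s((5 : Fin 7), 6)}



/-! ### Auxiliary machinery for the brute-force verification -/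

instance shortSubcycleAtDec [DecidableEq V] (l : List V) (i t : ℕ) :
    Decidable (ShortSubcycleAt l i t) := by
  have h : (∀ q < i + t, ∀ p < q, i ≤ p → l[p]? ≠ l[q]?) ↔
      (∀ p q, i ≤ p → p < q → q < i + t → l[p]? ≠ l[q]?) :=
    ⟨fun h p q hip hpq hq => h q hq p hpq hip, fun h q hq p hp hip => h p q hip hp hq⟩
  unfold ShortSubcycleAt
  exact instDecidableAnd (dq := instDecidableAnd (dq := instDecidableAnd (dq :=
    instDecidableAnd (dq := decidable_of_iff _ h))))

/-- Check for a short subcycle ending at the last position of `l`. -/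
def lastShort [DecidableEq V] (l : List V) : Bool :=
  (List.range 5).any fun t => decide (ShortSubcycleAt l (l.length - (t + 1)) t)

lemma lastShort_sound [DecidableEq V] {l : List V} (h : lastShort l = true) :
    ∃ i t, ShortSubcycleAt l i t := by
  obtain ⟨t, -, ht⟩ := List.any_eq_true.1 h
  exact ⟨_, t, of_decide_eq_true ht⟩

lemma ShortSubcycleAt.append {l l' : List V} {i t : ℕ}
    (h : ShortSubcycleAt l i t) : ShortSubcycleAt (l ++ l') i t := by
  obtain ⟨h1, h4, hlt, heq, hne⟩ := h
  have key : ∀ n, n < l.length → (l ++ l')[n]? = l[n]? := fun n hn =>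
    List.getElem?_append_left hn
  refine ⟨h1, h4, hlt.trans_le (by simp), ?_, ?_⟩
  · rw [key i (lt_of_le_of_lt (Nat.le_add_right i t) hlt), key (i + t) hlt]; exact heq
  · intro p q hip hpq hq
    rw [key p (by omega), key q (by omega)]
    exact hne p q hip hpq hq

/-- The list of the 11 edges of `F₆`. -/
def F6L : List (Sym2 (Fin 6)) :=
  [s(0,1), s(0,2), s(0,3), s(5,1), s(5,3), s(5,4),
   s(1,2), s(2,3), s(3,4), s(1,4), s(2,4)]

/-- Pruned depth-first search: `ok n rem l cur = true` certifies that every trail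
extending the partial trail with support `l` (currently at `cur`) by `n` further
steps using only edges from `rem` and exhausting `rem` produces a support with a
short subcycle. -/
def ok : ℕ → List (Sym2 (Fin 6)) → List (Fin 6) → Fin 6 → Bool
  | 0, _, l, _ => lastShort l
  | n + 1, rem, l, cur =>
    lastShort l ||
      (List.finRange 6).all fun w =>
        if s(cur, w) ∈ rem then ok n (rem.erase s(cur, w)) (l ++ [w]) w else true

lemma ok_sound : ∀ {c v : Fin 6} (W : F6.Walk c v)
    (rem : List (Sym2 (Fin 6))) (l : List (Fin 6)),
    W.IsTrail → rem.Nodup → (∀ e, e ∈ W.edges ↔ e ∈ rem) →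
    ok W.length rem l c = true →
    ∃ i t, ShortSubcycleAt (l ++ W.support.tail) i t := by
  intro c v W
  induction W with
  | nil =>
    intro rem l _ _ _ hok
    simp only [Walk.length_nil, ok] at hok
    simpa using lastShort_sound hok
  | @cons c b v hadj W ih =>
    intro rem l htrail hnd hmem hok
    rw [Walk.length_cons] at hok
    by_cases hs : lastShort l = true
    · obtain ⟨i, t, ht⟩ := lastShort_sound hs
      exact ⟨i, t, by simpa using ht.append⟩
    · simp only [ok, hs, Bool.false_or, List.all_eq_true] at hok
      have he : s(c, b) ∈ rem := (hmem _).1 (by simp [Walk.edges_cons])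
      have hok' := hok b (List.mem_finRange b)
      rw [if_pos he] at hok'
      have htrail' : W.IsTrail := htrail.of_cons
      have hnotmem : s(c, b) ∉ W.edges := by
        have := htrail.edges_nodup
        rw [Walk.edges_cons] at this
        exact (List.nodup_cons.1 this).1
      have hmem' : ∀ e, e ∈ W.edges ↔ e ∈ rem.erase s(c, b) := by
        intro e
        rw [hnd.mem_erase_iff]
        constructor
        · intro h
          exact ⟨fun hEq => hnotmem (hEq ▸ h), (hmem e).1 (by simp [Walk.edges_cons, h])⟩
        · rintro ⟨hne, h⟩
          rcases (List.mem_cons).1 ((Walk.edges_cons _ _ ▸ (hmem e).2 h)) with h' | h'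
          · exact absurd h' hne
          · exact h'
      have := ih (rem.erase s(c, b)) (l ++ [b]) htrail' (hnd.erase _) hmem' hok'
      rw [Walk.support_cons, List.tail_cons, W.support_eq_cons]
      simpa using this

lemma mem_F6_edgeSet (e : Sym2 (Fin 6)) : e ∈ F6.edgeSet ↔ e ∈ F6L := by
  induction e using Sym2.ind with
  | _ a b =>
    rw [mem_edgeSet]
    simp only [F6, fromEdgeSet_adj, Set.mem_insert_iff, Set.mem_singleton_iff]
    revert a b
    decide

set_option maxHeartbeats 4000000 in
lemma okAll : ∀ u : Fin 6, ok 11 F6L [u] u = true := by decide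

/-- Every Eulerian trail of `F₆` contains a subcycle of length at most 4;
in particular, `F₆` admits no 4-locally self-avoiding Eulerian trail. -/
theorem F6_no_LSA4_eulerian_trail :
    (∀ (u v : Fin 6) (W : F6.Walk u v), IsEulerianTrail W →
      ∃ i t, ShortSubcycleAt W.support i t) ∧
    ¬ ∃ (u v : Fin 6) (W : F6.Walk u v), IsEulerianTrail W ∧ TrailLSA4 W := by
  have main : ∀ (u v : Fin 6) (W : F6.Walk u v), IsEulerianTrail W →
      ∃ i t, ShortSubcycleAt W.support i t := by
    intro u v W hW
    obtain ⟨htr, hedge⟩ := hW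
    have hmem : ∀ e, e ∈ W.edges ↔ e ∈ F6L := fun e =>
      ((hedge e).symm).trans (mem_F6_edgeSet e)
    have hperm : W.edges.Perm F6L :=
      (List.perm_ext_iff_of_nodup htr.edges_nodup (by decide)).2 hmem
    have hlen : W.length = 11 := by
      rw [← Walk.length_edges]; simpa [F6L] using hperm.length_eq
    have h := ok_sound W F6L [u] htr (by decide) hmem (by rw [hlen]; exact okAll u)
    rw [W.support_eq_cons]
    simpa using h
  refine ⟨main, ?_⟩
  rintro ⟨u, v, W, hE, hL⟩
  exact hL (main u v W hE)

end Quartic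
end

section
/- The octahedron admits no 4-locally self-avoiding Eulerian circuit: every Eulerian circuit of the octahedron contains a subcycle of length at most 4. -/
open SimpleGraph

namespace Quartic

variable {V : Type*}

/-! ### Auxiliary machinery for Statement 1 -/

lemma oct_adj (i j : Fin 6) : Octahedron.Adj i j ↔ (i : ℕ) % 3 ≠ (j : ℕ) % 3 := by
  rw [Octahedron, SimpleGraph.fromRel_adj]
  constructor
  · rintro ⟨h1, h2 | h2⟩
    · exact h2
    · exact fun h => h2 h.symm
  · intro h
    exact ⟨fun e => h (by rw [e]), Or.inl h⟩

/-- Boolean adjacency test for the octahedron. -/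
def adjB (i j : Fin 6) : Bool := decide ((i : ℕ) % 3 ≠ (j : ℕ) % 3)

/-- Does the (unordered) edge `{a,b}` occur between consecutive entries of `l`? -/
def edgeMem (a b : Fin 6) : List (Fin 6) → Bool
  | x :: y :: r => ((a == x && b == y) || (a == y && b == x)) || edgeMem a b (y :: r)
  | _ => false

lemma edgeMem_walk {u v : Fin 6} (W : Octahedron.Walk u v) (a b : Fin 6) :
    edgeMem a b W.support = true ↔ s(a, b) ∈ W.edges := by
  induction W with
  | nil => simp [edgeMem]
  | @cons x y z h W ih =>
    rw [Walk.support_cons, Walk.edges_cons, W.support_eq_cons]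
    rw [W.support_eq_cons] at ih
    simp only [edgeMem, Bool.or_eq_true, Bool.and_eq_true, beq_iff_eq, List.mem_cons, ih,
      Sym2.eq_iff]

/-- All six vertices. -/
def verts : List (Fin 6) := [0, 1, 2, 3, 4, 5]

lemma mem_verts (v : Fin 6) : v ∈ verts := by fin_cases v <;> decide

/-- One DFS step: all legal locally-self-avoiding one-edge extensions (by prepending). -/
def exts : List (Fin 6) → List (List (Fin 6))
  | [] => []
  | x :: r =>
    (verts.filter
        (fun w => adjB w x && !edgeMem w x (x :: r) && !decide (w ∈ (x :: r).take 4))).map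
      (fun w => w :: x :: r)

/-- All supports of locally-self-avoiding trails with `n` edges in the octahedron. -/
def enum : ℕ → List (List (Fin 6))
  | 0 => verts.map (fun u => [u])
  | n + 1 => ((enum n).map exts).flatten

/-- `l` has no repeated entry at (linear) distance at most 4. -/
def LD (l : List (Fin 6)) : Prop :=
  ∀ j t : ℕ, 1 ≤ t → t ≤ 4 → j + t < l.length → l[j]? ≠ l[j + t]?

lemma LD_tail {a : Fin 6} {l : List (Fin 6)} (h : LD (a :: l)) : LD l := by
  intro j t h1 h4 hlt
  have h' := h (j + 1) t h1 h4 (by simp; omega)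
  rw [show j + 1 + t = (j + t) + 1 by omega] at h'
  simpa using h'

lemma not_mem_take4 {u : Fin 6} {l : List (Fin 6)} (h : LD (u :: l)) : u ∉ l.take 4 := by
  intro hm
  obtain ⟨k, hk, he⟩ := List.mem_iff_getElem.mp hm
  rw [List.length_take] at hk
  have hk4 : k < 4 := lt_of_lt_of_le hk (min_le_left _ _)
  have hkl : k < l.length := lt_of_lt_of_le hk (min_le_right _ _)
  apply h 0 (k + 1) (by omega) (by omega) (by simp; omega)
  rw [List.getElem?_cons_zero, zero_add, List.getElem?_cons_succ,
    List.getElem?_eq_getElem hkl]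
  rw [List.getElem_take] at he
  rw [he]

lemma mem_enum : ∀ {u v : Fin 6} (W : Octahedron.Walk u v),
    W.IsTrail → LD W.support → W.support ∈ enum W.length := by
  intro u v W
  induction W with
  | nil =>
    intro _ _
    simpa [enum, Walk.support_nil, Walk.length_nil] using
      List.mem_map_of_mem (f := fun u => [u]) (mem_verts _)
  | @cons x y z h W ih =>
    intro ht hld
    rw [Walk.support_cons] at hld ⊢
    rw [Walk.length_cons]
    have ht' := (Walk.isTrail_cons h W).mp ht
    have ihm := ih ht'.1 (LD_tail hld)
    have hadj : adjB x y = true := by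
      rw [adjB, decide_eq_true_iff]; exact (oct_adj x y).mp h
    have hem : edgeMem x y W.support = false := by
      rw [Bool.eq_false_iff]
      exact fun hh => ht'.2 ((edgeMem_walk W x y).mp hh)
    have htk : x ∉ W.support.take 4 := not_mem_take4 hld
    show x :: W.support ∈ enum (W.length + 1)
    rw [enum]
    apply List.mem_flatten.mpr
    refine ⟨exts W.support, List.mem_map_of_mem (f := exts) ihm, ?_⟩
    rw [W.support_eq_cons] at hem htk ⊢
    show x :: y :: W.support.tail ∈ exts (y :: W.support.tail)
    rw [exts]
    apply List.mem_map.mpr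
    refine ⟨x, List.mem_filter.mpr ⟨mem_verts x, ?_⟩, rfl⟩
    rw [hadj, hem]
    simpa using htk

/-- Existence of a short cyclic repetition (without the distinctness requirement). -/
def CycRep (l : List (Fin 6)) : Prop :=
  ∃ t, 1 ≤ t ∧ t ≤ 4 ∧ ∃ i, l[i % l.length]? = l[(i + t) % l.length]?

lemma lemA_aux (l : List (Fin 6)) (hl : 4 ≤ l.length) :
    ∀ t, 1 ≤ t → t ≤ 4 →
      (∃ i, l[i % l.length]? = l[(i + t) % l.length]?) →
      ∃ i t', CyclicShortSubcycleAt l i t' := by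
  intro t
  induction t using Nat.strong_induction_on with
  | _ t ih =>
    rintro ht1 ht4 ⟨i, hrep⟩
    by_cases hd : ∀ p q, p < q → q < t →
        l[(i + p) % l.length]? ≠ l[(i + q) % l.length]?
    · exact ⟨i, t, ht1, ht4, le_trans ht4 hl, hrep, hd⟩
    · push_neg at hd
      obtain ⟨p, q, hpq, hqt, heq⟩ := hd
      refine ih (q - p) (by omega) (by omega) (by omega) ⟨i + p, ?_⟩
      rw [show i + p + (q - p) = i + q by omega]
      exact heq

lemma lemA (l : List (Fin 6)) (hl : 4 ≤ l.length) (h : CycRep l) :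
    ∃ i t, CyclicShortSubcycleAt l i t := by
  obtain ⟨t, h1, h4, hi⟩ := h
  exact lemA_aux l hl t h1 h4 hi

/-- The 12 edges of the octahedron as an explicit list. -/
def E12 : List (Sym2 (Fin 6)) :=
  [s((0 : Fin 6), 1), s((0 : Fin 6), 2), s((0 : Fin 6), 4), s((0 : Fin 6), 5),
   s((1 : Fin 6), 2), s((1 : Fin 6), 3), s((1 : Fin 6), 5),
   s((2 : Fin 6), 3), s((2 : Fin 6), 4),
   s((3 : Fin 6), 4), s((3 : Fin 6), 5), s((4 : Fin 6), 5)]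

lemma enum12_empty : enum 12 = [] := by decide

/-- The octahedron admits no 4-locally self-avoiding Eulerian circuit:
every Eulerian circuit of the octahedron contains a (cyclic) subcycle of length at
most 4. -/
theorem octahedron_no_LSA4_eulerian_circuit :
    ∀ (u : Fin 6) (W : Octahedron.Walk u u), IsEulerianTrail W →
      ∃ i t, CyclicShortSubcycleAt W.support.dropLast i t := by
  intro u W hW
  have hlen : W.length = 12 := by
    have hnd : W.edges.Nodup := hW.1.edges_nodup
    have hE : ∀ e, e ∈ W.edges ↔ e ∈ E12 := by
      intro e
      rw [← hW.2 e]
      induction e using Sym2.ind with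
      | _ a b =>
        rw [mem_edgeSet, oct_adj]
        revert a b
        decide
    have hperm : W.edges.Perm E12 :=
      (List.perm_ext_iff_of_nodup hnd (by decide)).mpr hE
    have hlen' := hperm.length_eq
    rw [Walk.length_edges] at hlen'
    simpa [E12] using hlen'
  set l := W.support.dropLast with hldef
  have hn : l.length = 12 := by
    rw [hldef, List.length_dropLast, Walk.length_support, hlen]
  have hsl : W.support.length = 13 := by rw [Walk.length_support, hlen]
  have hget : ∀ j, j ≤ 12 → W.support[j]? = l[j % 12]? := by
    intro j hj
    rcases lt_or_eq_of_le hj with hj' | hj'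
    · rw [Nat.mod_eq_of_lt hj']
      have hjl : j < l.length := by omega
      have hjs : j < W.support.length := by omega
      rw [List.getElem?_eq_getElem hjs,
        List.getElem?_eq_getElem hjl]
      exact congrArg some (List.getElem_dropLast _).symm
    · subst hj'
      have h0l : 0 < l.length := by omega
      have hjs : (12 : ℕ) < W.support.length := by omega
      rw [Nat.mod_self]
      have h1 : W.support[12]? = some u := by
        rw [List.getElem?_eq_getElem hjs]
        rw [show W.support[(12 : ℕ)] = W.support[W.support.length - 1]'(by omega) from by
          congr 1; omega]
        rw [← List.getLast_eq_getElem W.support_ne_nil]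
        exact congrArg some W.getLast_support
      have h2 : l[0]? = some u := by
        rw [List.getElem?_eq_getElem h0l]
        have he0 : l[(0 : ℕ)] = W.support[(0 : ℕ)]'(by omega) :=
          List.getElem_dropLast _
        rw [he0]
        have hs : W.support[(0 : ℕ)]? = some u := by
          rw [W.support_eq_cons]; simp
        rw [List.getElem?_eq_getElem (by omega)] at hs
        exact hs
      rw [h1, h2]
  by_cases hc : CycRep l
  · exact lemA l (by omega) hc
  · exfalso
    have hld : LD W.support := by
      intro j t h1 h4 hjt
      rw [hsl] at hjt
      rw [hget j (by omega), hget (j + t) (by omega)]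
      intro heq
      exact hc ⟨t, h1, h4, j, by rw [hn]; exact heq⟩
    have hmem := mem_enum W hW.1 hld
    rw [hlen, enum12_empty] at hmem
    exact List.not_mem_nil hmem


end Quartic
end

section
/- For every integer n ≥ 4, the n-antiprism admits a 4-locally self-avoiding Eulerian circuit. -/
open SimpleGraph

namespace Quartic

variable {V : Type*}

variable {V : Type*}

def walkOfSeq (G : SimpleGraph V) (f : ℕ → V) :
    ∀ m : ℕ, (∀ p, p < m → G.Adj (f p) (f (p + 1))) → G.Walk (f 0) (f m)
  | 0, _ => Walk.nil
  | m + 1, h => (walkOfSeq G f m fun p hp => h p (by omega)).concat (h m (by omega))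

lemma support_walkOfSeq (G : SimpleGraph V) (f : ℕ → V) (m : ℕ) (h) :
    (walkOfSeq G f m h).support = (List.range (m + 1)).map f := by
  induction m with
  | zero => simp [walkOfSeq, List.range_succ]
  | succ m ih =>
    rw [walkOfSeq, Walk.support_concat, ih]
    simp [List.range_succ]

lemma edges_walkOfSeq (G : SimpleGraph V) (f : ℕ → V) (m : ℕ) (h) :
    (walkOfSeq G f m h).edges = (List.range m).map (fun p => s(f p, f (p + 1))) := by
  induction m with
  | zero => simp [walkOfSeq]
  | succ m ih =>
    rw [walkOfSeq, Walk.edges_concat, ih, List.range_succ]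
    simp

lemma hasCircuit_of_seq (G : SimpleGraph V) (f : ℕ → V) (L : ℕ) (hL : 4 < L)
    (hadj : ∀ p, p < L → G.Adj (f p) (f (p + 1)))
    (hclose : f L = f 0)
    (hinj : ∀ p q, p < L → q < L → s(f p, f (p + 1)) = s(f q, f (q + 1)) → p = q)
    (hsurj : ∀ e, e ∈ G.edgeSet → ∃ p, p < L ∧ e = s(f p, f (p + 1)))
    (hgap : ∀ a b, a < L → b < L → a < b → f a = f b → 4 < b - a ∧ b - a + 4 < L) :
    HasLSA4EulerianCircuit G := by
  refine ⟨f 0, (walkOfSeq G f L hadj).copy rfl hclose, ⟨?_, ?_⟩, ?_⟩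
  · rw [Walk.isTrail_def, Walk.edges_copy, edges_walkOfSeq]
    exact List.Nodup.map_on
      (fun x hx y hy hxy => hinj x y (List.mem_range.mp hx) (List.mem_range.mp hy) hxy)
      (List.nodup_range (n := L))
  · intro e
    constructor
    · intro he
      obtain ⟨p, hp, rfl⟩ := hsurj e he
      rw [Walk.edges_copy, edges_walkOfSeq]
      exact List.mem_map.mpr ⟨p, List.mem_range.mpr hp, rfl⟩
    · exact fun he => Walk.edges_subset_edgeSet _ he
  · have hsup : ((walkOfSeq G f L hadj).copy rfl hclose).support.dropLast
        = (List.range L).map f := by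
      rw [Walk.support_copy, support_walkOfSeq, List.range_succ, List.map_append]
      simpa using List.dropLast_concat
    rintro ⟨i, t, ht1, ht4, htL, heq, -⟩
    rw [hsup] at htL heq
    have hlen : ((List.range L).map f).length = L := by simp
    rw [hlen] at htL heq
    have hget : ∀ a, a < L → ((List.range L).map f)[a]? = some (f a) := by
      intro a ha
      simp [ha]
    have hLpos : 0 < L := by omega
    set a := i % L with ha_def
    set b := (i + t) % L with hb_def
    have haL : a < L := Nat.mod_lt _ hLpos
    have hbL : b < L := Nat.mod_lt _ hLpos
    rw [hget a haL, hget b hbL] at heq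
    have hfab : f a = f b := Option.some.inj heq
    have hb2 : b = (a + t) % L := by
      rw [hb_def, ha_def, Nat.add_mod i t L, Nat.mod_eq_of_lt (show t < L by omega)]
    rcases Nat.lt_or_ge (a + t) L with hc | hc
    · have hb3 : b = a + t := by rw [hb2, Nat.mod_eq_of_lt hc]
      have := hgap a b haL hbL (by omega) hfab
      omega
    · have hc2 : a + t - L < L := by omega
      have hb3 : b = a + t - L := by
        rw [hb2, Nat.mod_eq_sub_mod hc, Nat.mod_eq_of_lt hc2]
      have := hgap b a hbL haL (by omega) hfab.symm
      omega



lemma adj_iff {n : ℕ} {a b : Fin 2 × ZMod n} :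
    (Antiprism n).Adj a b ↔ a ≠ b ∧
      (((a.1 = b.1 ∧ b.2 = a.2 + 1) ∨ (a.1 = 0 ∧ b.1 = 1 ∧ (b.2 = a.2 ∨ a.2 = b.2 + 1))) ∨
       ((b.1 = a.1 ∧ a.2 = b.2 + 1) ∨ (b.1 = 0 ∧ a.1 = 1 ∧ (a.2 = b.2 ∨ b.2 = a.2 + 1)))) :=
  SimpleGraph.fromRel_adj _ a b

lemma castInj {n a b : ℕ} (hn : 0 < n) (ha : a < n) (hb : b < n)
    (h : (a : ZMod n) = b) : a = b := by
  haveI : NeZero n := ⟨by omega⟩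
  have := congrArg ZMod.val h
  rwa [ZMod.val_cast_of_lt ha, ZMod.val_cast_of_lt hb] at this

lemma zone {n : ℕ} (hn : 2 ≤ n) : (1 : ZMod n) ≠ 0 := by
  intro h
  have h' : ((1 : ℕ) : ZMod n) = ((0 : ℕ) : ZMod n) := by exact_mod_cast h
  have := castInj (by omega) (by omega) (by omega) h'
  omega

lemma ztwo {n : ℕ} (hn : 3 ≤ n) : (2 : ZMod n) ≠ 0 := by
  intro h
  have h' : ((2 : ℕ) : ZMod n) = ((0 : ℕ) : ZMod n) := by exact_mod_cast h
  have := castInj (by omega) (by omega) (by omega) h'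
  omega

lemma cast_wrap {n : ℕ} (hn : 1 ≤ n) : ((n - 1 : ℕ) : ZMod n) + 1 = 0 := by
  calc ((n - 1 : ℕ) : ZMod n) + 1 = ((n - 1 + 1 : ℕ) : ZMod n) := by push_cast; ring
    _ = 0 := by rw [show n - 1 + 1 = n from by omega, ZMod.natCast_self]

lemma adj_spoke {n : ℕ} (hn : 2 ≤ n) (x : ZMod n) :
    (Antiprism n).Adj (0, x) (1, x) :=
  adj_iff.mpr ⟨fun h => by simp [Prod.ext_iff] at h,
    Or.inl (Or.inr ⟨rfl, rfl, Or.inl rfl⟩)⟩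

lemma adj_slant {n : ℕ} (hn : 2 ≤ n) (x : ZMod n) :
    (Antiprism n).Adj (1, x) (0, x + 1) :=
  adj_iff.mpr ⟨fun h => by simp [Prod.ext_iff] at h,
    Or.inr (Or.inr ⟨rfl, rfl, Or.inr rfl⟩)⟩

lemma adj_inner {n : ℕ} (hn : 2 ≤ n) (x : ZMod n) :
    (Antiprism n).Adj (1, x) (1, x + 1) :=
  adj_iff.mpr ⟨fun h => zone hn (by linear_combination - (congrArg Prod.snd h)),
    Or.inl (Or.inl ⟨rfl, rfl⟩)⟩

lemma adj_outer {n : ℕ} (hn : 2 ≤ n) (x : ZMod n) :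
    (Antiprism n).Adj (0, x) (0, x + 1) :=
  adj_iff.mpr ⟨fun h => zone hn (by linear_combination - (congrArg Prod.snd h)),
    Or.inl (Or.inl ⟨rfl, rfl⟩)⟩

def fgen (n : ℕ) (p : ℕ) : Fin 2 × ZMod n :=
  if p < 2 * n then
    (if p % 2 = 0 then ((0 : Fin 2), ((p / 2 : ℕ) : ZMod n))
     else ((1 : Fin 2), ((p / 2 : ℕ) : ZMod n)))
  else if p < 3 * n then ((1 : Fin 2), ((p - 2 * n : ℕ) : ZMod n))
  else ((0 : Fin 2), ((p - 3 * n : ℕ) : ZMod n))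

lemma fgen_ze {n p : ℕ} (h : p < 2 * n) (he : p % 2 = 0) :
    fgen n p = (0, ((p / 2 : ℕ) : ZMod n)) := by
  simp only [fgen, if_pos h, he]
  simp

lemma fgen_zo {n p : ℕ} (h : p < 2 * n) (ho : p % 2 = 1) :
    fgen n p = (1, ((p / 2 : ℕ) : ZMod n)) := by
  simp only [fgen, if_pos h, ho]
  simp

lemma fgen_mid {n p : ℕ} (h1 : 2 * n ≤ p) (h2 : p < 3 * n) :
    fgen n p = (1, ((p - 2 * n : ℕ) : ZMod n)) := by
  simp only [fgen, if_neg (by omega : ¬ p < 2 * n), if_pos h2]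

lemma fgen_top {n p : ℕ} (h : 3 * n ≤ p) :
    fgen n p = (0, ((p - 3 * n : ℕ) : ZMod n)) := by
  simp only [fgen, if_neg (by omega : ¬ p < 2 * n), if_neg (by omega : ¬ p < 3 * n)]

def edgeAt (n p : ℕ) : Sym2 (Fin 2 × ZMod n) := s(fgen n p, fgen n (p + 1))

def canonE (n : ℕ) (kind : ℕ) (x : ZMod n) : Sym2 (Fin 2 × ZMod n) :=
  match kind with
  | 0 => s(((0 : Fin 2), x), ((1 : Fin 2), x))
  | 1 => s(((1 : Fin 2), x), ((0 : Fin 2), x + 1))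
  | 2 => s(((1 : Fin 2), x), ((1 : Fin 2), x + 1))
  | _ => s(((0 : Fin 2), x), ((0 : Fin 2), x + 1))

def posE (n kind k : ℕ) : ℕ :=
  match kind with
  | 0 => 2 * k
  | 1 => if k = n - 1 then 3 * n - 1 else 2 * k + 1
  | 2 => if k = n - 1 then 2 * n - 1 else 2 * n + k
  | _ => 3 * n + k

lemma edgeAt_pos {n : ℕ} (hn : 4 ≤ n) {kind k : ℕ} (hkind : kind < 4) (hk : k < n) :
    posE n kind k < 4 * n ∧ edgeAt n (posE n kind k) = canonE n kind ((k : ZMod n)) := by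
  interval_cases kind
  · refine ⟨by show 2 * k < 4 * n; omega, ?_⟩
    show s(fgen n (2 * k), fgen n (2 * k + 1)) = _
    rw [fgen_ze (by omega) (by omega), fgen_zo (by omega) (by omega),
      show 2 * k / 2 = k from by omega, show (2 * k + 1) / 2 = k from by omega]
    rfl
  · by_cases hk1 : k = n - 1
    · subst hk1
      rw [show posE n 1 (n - 1) = 3 * n - 1 from if_pos rfl]
      refine ⟨by omega, ?_⟩
      show s(fgen n (3 * n - 1), fgen n (3 * n - 1 + 1)) = _
      rw [show 3 * n - 1 + 1 = 3 * n from by omega,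
        fgen_mid (by omega) (by omega), fgen_top (le_refl _),
        show 3 * n - 1 - 2 * n = n - 1 from by omega,
        show 3 * n - 3 * n = 0 from by omega]
      show s((1, ((n - 1 : ℕ) : ZMod n)), (0, ((0 : ℕ) : ZMod n)))
          = s((1, ((n - 1 : ℕ) : ZMod n)), (0, ((n - 1 : ℕ) : ZMod n) + 1))
      rw [cast_wrap (by omega), Nat.cast_zero]
    · rw [show posE n 1 k = 2 * k + 1 from if_neg hk1]
      have hk2 : k ≤ n - 2 := by omega
      refine ⟨by omega, ?_⟩
      show s(fgen n (2 * k + 1), fgen n (2 * k + 1 + 1)) = _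
      rw [fgen_zo (by omega) (by omega), fgen_ze (by omega) (by omega),
        show (2 * k + 1) / 2 = k from by omega,
        show (2 * k + 1 + 1) / 2 = k + 1 from by omega]
      show _ = s(((1 : Fin 2), ((k : ℕ) : ZMod n)), ((0 : Fin 2), ((k : ℕ) : ZMod n) + 1))
      push_cast
      rfl
  · by_cases hk1 : k = n - 1
    · subst hk1
      rw [show posE n 2 (n - 1) = 2 * n - 1 from if_pos rfl]
      refine ⟨by omega, ?_⟩
      show s(fgen n (2 * n - 1), fgen n (2 * n - 1 + 1)) = _
      rw [show 2 * n - 1 + 1 = 2 * n from by omega,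
        fgen_zo (by omega) (by omega), fgen_mid (le_refl _) (by omega),
        show (2 * n - 1) / 2 = n - 1 from by omega,
        show 2 * n - 2 * n = 0 from by omega]
      show s((1, ((n - 1 : ℕ) : ZMod n)), (1, ((0 : ℕ) : ZMod n)))
          = s((1, ((n - 1 : ℕ) : ZMod n)), (1, ((n - 1 : ℕ) : ZMod n) + 1))
      rw [cast_wrap (by omega), Nat.cast_zero]
    · rw [show posE n 2 k = 2 * n + k from if_neg hk1]
      have hk2 : k ≤ n - 2 := by omega
      refine ⟨by omega, ?_⟩
      show s(fgen n (2 * n + k), fgen n (2 * n + k + 1)) = _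
      rw [fgen_mid (by omega) (by omega), fgen_mid (by omega) (by omega),
        show 2 * n + k - 2 * n = k from by omega,
        show 2 * n + k + 1 - 2 * n = k + 1 from by omega]
      show _ = s(((1 : Fin 2), ((k : ℕ) : ZMod n)), ((1 : Fin 2), ((k : ℕ) : ZMod n) + 1))
      push_cast
      rfl
  · refine ⟨by show 3 * n + k < 4 * n; omega, ?_⟩
    show s(fgen n (3 * n + k), fgen n (3 * n + k + 1)) = _
    rw [fgen_top (by omega), fgen_top (by omega),
      show 3 * n + k - 3 * n = k from by omega,
      show 3 * n + k + 1 - 3 * n = k + 1 from by omega]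
    show _ = s(((0 : Fin 2), ((k : ℕ) : ZMod n)), ((0 : Fin 2), ((k : ℕ) : ZMod n) + 1))
    push_cast
    rfl

lemma canonE_inj {n : ℕ} (hn : 4 ≤ n) {k1 k2 : ℕ} (h1 : k1 < 4) (h2 : k2 < 4)
    {x y : ZMod n} (h : canonE n k1 x = canonE n k2 y) : k1 = k2 ∧ x = y := by
  have e01 : ((0 : Fin 2) = 1) = False := eq_false (by decide)
  have e10 : ((1 : Fin 2) = 0) = False := eq_false (by decide)
  interval_cases k1 <;> interval_cases k2 <;>
      simp only [canonE, Sym2.eq_iff, Prod.mk.injEq, e01, e10, true_and, and_true,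
        false_and, and_false, false_or, or_false] at h
  · exact ⟨rfl, h.1⟩
  · exact absurd (by linear_combination h.2 - h.1 : (1 : ZMod n) = 0) (zone (by omega))
  · exact absurd (by linear_combination h.2 - h.1 : (1 : ZMod n) = 0) (zone (by omega))
  · exact ⟨rfl, h.1⟩
  · rcases h with h | h
    · exact ⟨rfl, h.1⟩
    · exact absurd (by linear_combination h.2 - h.1 : (2 : ZMod n) = 0) (ztwo (by omega))
  · rcases h with h | h
    · exact ⟨rfl, h.1⟩
    · exact absurd (by linear_combination h.2 - h.1 : (2 : ZMod n) = 0) (ztwo (by omega))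

lemma edge_form {n : ℕ} (hn : 4 ≤ n) {p : ℕ} (hp : p < 4 * n) :
    ∃ kind k, kind < 4 ∧ k < n ∧ p = posE n kind k ∧ edgeAt n p = canonE n kind ((k : ZMod n)) := by
  rcases (by omega :
      (p % 2 = 0 ∧ p < 2 * n) ∨ (p % 2 = 1 ∧ p < 2 * n - 1) ∨ p = 2 * n - 1 ∨
      (2 * n ≤ p ∧ p ≤ 3 * n - 2) ∨ p = 3 * n - 1 ∨ 3 * n ≤ p) with h | h | h | h | h | h
  · have hpe : p = posE n 0 (p / 2) := by show p = 2 * (p / 2); omega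
    exact ⟨0, p / 2, by omega, by omega, hpe,
      by have hh := (edgeAt_pos hn (kind := 0) (k := p / 2) (by omega) (by omega)).2; rw [← hpe] at hh; exact hh⟩
  · have hpe : p = posE n 1 (p / 2) := by
      show p = if p / 2 = n - 1 then 3 * n - 1 else 2 * (p / 2) + 1
      rw [if_neg (by omega)]; omega
    exact ⟨1, p / 2, by omega, by omega, hpe,
      by have hh := (edgeAt_pos hn (kind := 1) (k := p / 2) (by omega) (by omega)).2; rw [← hpe] at hh; exact hh⟩
  · have hpe : p = posE n 2 (n - 1) := by
      show p = if n - 1 = n - 1 then 2 * n - 1 else _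
      rw [if_pos rfl]; omega
    exact ⟨2, n - 1, by omega, by omega, hpe,
      by have hh := (edgeAt_pos hn (kind := 2) (k := n - 1) (by omega) (by omega)).2; rw [← hpe] at hh; exact hh⟩
  · have hpe : p = posE n 2 (p - 2 * n) := by
      show p = if p - 2 * n = n - 1 then 2 * n - 1 else 2 * n + (p - 2 * n)
      rw [if_neg (by omega)]; omega
    exact ⟨2, p - 2 * n, by omega, by omega, hpe,
      by have hh := (edgeAt_pos hn (kind := 2) (k := p - 2 * n) (by omega) (by omega)).2; rw [← hpe] at hh; exact hh⟩
  · have hpe : p = posE n 1 (n - 1) := by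
      show p = if n - 1 = n - 1 then 3 * n - 1 else _
      rw [if_pos rfl]; omega
    exact ⟨1, n - 1, by omega, by omega, hpe,
      by have hh := (edgeAt_pos hn (kind := 1) (k := n - 1) (by omega) (by omega)).2; rw [← hpe] at hh; exact hh⟩
  · have hpe : p = posE n 3 (p - 3 * n) := by show p = 3 * n + (p - 3 * n); omega
    exact ⟨3, p - 3 * n, by omega, by omega, hpe,
      by have hh := (edgeAt_pos hn (kind := 3) (k := p - 3 * n) (by omega) (by omega)).2; rw [← hpe] at hh; exact hh⟩

lemma adj_of_canon {n : ℕ} (hn : 4 ≤ n) {kind : ℕ} (hkind : kind < 4) {x : ZMod n}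
    {a b : Fin 2 × ZMod n} (h : s(a, b) = canonE n kind x) : (Antiprism n).Adj a b := by
  have h2 : (2 : ℕ) ≤ n := by omega
  interval_cases kind <;>
      rcases Sym2.eq_iff.mp h with ⟨rfl, rfl⟩ | ⟨rfl, rfl⟩
  · exact adj_spoke h2 x
  · exact (adj_spoke h2 x).symm
  · exact adj_slant h2 x
  · exact (adj_slant h2 x).symm
  · exact adj_inner h2 x
  · exact (adj_inner h2 x).symm
  · exact adj_outer h2 x
  · exact (adj_outer h2 x).symm

lemma fgen_adj {n : ℕ} (hn : 4 ≤ n) {p : ℕ} (hp : p < 4 * n) :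
    (Antiprism n).Adj (fgen n p) (fgen n (p + 1)) := by
  obtain ⟨kind, k, hkind, hk, hpe, hE⟩ := edge_form hn hp
  exact adj_of_canon hn hkind hE

lemma fgen_inj {n : ℕ} (hn : 4 ≤ n) {p q : ℕ} (hp : p < 4 * n) (hq : q < 4 * n)
    (h : edgeAt n p = edgeAt n q) : p = q := by
  obtain ⟨k1, x1, hk1, hx1, hp1, hE1⟩ := edge_form hn hp
  obtain ⟨k2, x2, hk2, hx2, hp2, hE2⟩ := edge_form hn hq
  have hcc : canonE n k1 ((x1 : ZMod n)) = canonE n k2 ((x2 : ZMod n)) := by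
    rw [← hE1, ← hE2, h]
  obtain ⟨hkk, hxx⟩ := canonE_inj hn hk1 hk2 hcc
  have := castInj (by omega) hx1 hx2 hxx
  subst hkk this
  rw [hp1, hp2]

lemma fgen_surj {n : ℕ} (hn : 4 ≤ n) (e : Sym2 (Fin 2 × ZMod n))
    (he : e ∈ (Antiprism n).edgeSet) : ∃ p, p < 4 * n ∧ e = edgeAt n p := by
  haveI : NeZero n := ⟨by omega⟩
  have key : ∀ a b : Fin 2 × ZMod n,
      ((a.1 = b.1 ∧ b.2 = a.2 + 1) ∨ (a.1 = 0 ∧ b.1 = 1 ∧ (b.2 = a.2 ∨ a.2 = b.2 + 1))) →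
      ∃ p, p < 4 * n ∧ s(a, b) = edgeAt n p := by
    rintro ⟨a1, a2⟩ ⟨b1, b2⟩ hr
    have hv : ∀ x : ZMod n, ((x.val : ℕ) : ZMod n) = x := fun x => ZMod.natCast_rightInverse x
    rcases hr with ⟨h1, h2⟩ | ⟨h1, h2, h3⟩
    · dsimp only at h1 h2
      subst h1 h2
      fin_cases a1
      · refine ⟨posE n 3 a2.val, (edgeAt_pos hn (kind := 3) (by omega) (ZMod.val_lt a2)).1, ?_⟩
        rw [(edgeAt_pos hn (kind := 3) (by omega) (ZMod.val_lt a2)).2, hv]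
        rfl
      · refine ⟨posE n 2 a2.val, (edgeAt_pos hn (kind := 2) (by omega) (ZMod.val_lt a2)).1, ?_⟩
        rw [(edgeAt_pos hn (kind := 2) (by omega) (ZMod.val_lt a2)).2, hv]
        rfl
    · dsimp only at h1 h2 h3
      subst h1 h2
      rcases h3 with h3 | h3
      · subst h3
        refine ⟨posE n 0 b2.val, (edgeAt_pos hn (kind := 0) (by omega) (ZMod.val_lt b2)).1, ?_⟩
        rw [(edgeAt_pos hn (kind := 0) (by omega) (ZMod.val_lt b2)).2, hv]
        rfl
      · subst h3
        refine ⟨posE n 1 b2.val, (edgeAt_pos hn (kind := 1) (by omega) (ZMod.val_lt b2)).1, ?_⟩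
        rw [(edgeAt_pos hn (kind := 1) (by omega) (ZMod.val_lt b2)).2, hv]
        exact Sym2.eq_swap
  induction e using Sym2.ind with
  | _ a b =>
    rw [SimpleGraph.mem_edgeSet, adj_iff] at he
    rcases he.2 with h | h
    · exact key a b h
    · obtain ⟨p, hp, hE⟩ := key b a h
      exact ⟨p, hp, by rw [Sym2.eq_swap]; exact hE⟩

lemma fgen_gap {n : ℕ} (hn : 5 ≤ n) {a b : ℕ} (haL : a < 4 * n) (hbL : b < 4 * n)
    (hab : a < b) (h : fgen n a = fgen n b) : 4 < b - a ∧ b - a + 4 < 4 * n := by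
  have h0 : 0 < n := by omega
  have efst : ∀ (x y : ZMod n), ((0 : Fin 2), x) = ((1 : Fin 2), y) → False := by
    intro x y hxy
    simpa using congrArg Prod.fst hxy
  rcases (by omega : (a % 2 = 0 ∧ a < 2 * n) ∨ (a % 2 = 1 ∧ a < 2 * n) ∨
      (2 * n ≤ a ∧ a < 3 * n) ∨ 3 * n ≤ a) with ⟨ha1, ha2⟩ | ⟨ha1, ha2⟩ | ⟨ha1, ha2⟩ | ha1 <;>
    rcases (by omega : (b % 2 = 0 ∧ b < 2 * n) ∨ (b % 2 = 1 ∧ b < 2 * n) ∨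
      (2 * n ≤ b ∧ b < 3 * n) ∨ 3 * n ≤ b) with ⟨hb1, hb2⟩ | ⟨hb1, hb2⟩ | ⟨hb1, hb2⟩ | hb1
  · rw [fgen_ze ha2 ha1, fgen_ze hb2 hb1] at h
    have := castInj h0 (by omega) (by omega) (congrArg Prod.snd h)
    omega
  · rw [fgen_ze ha2 ha1, fgen_zo hb2 hb1] at h
    exact absurd h (fun h => efst _ _ h)
  · rw [fgen_ze ha2 ha1, fgen_mid hb1 hb2] at h
    exact absurd h (fun h => efst _ _ h)
  · rw [fgen_ze ha2 ha1, fgen_top hb1] at h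
    have := castInj h0 (by omega) (by omega) (congrArg Prod.snd h)
    omega
  · rw [fgen_zo ha2 ha1, fgen_ze hb2 hb1] at h
    exact absurd h (fun h => efst _ _ h.symm)
  · rw [fgen_zo ha2 ha1, fgen_zo hb2 hb1] at h
    have := castInj h0 (by omega) (by omega) (congrArg Prod.snd h)
    omega
  · rw [fgen_zo ha2 ha1, fgen_mid hb1 hb2] at h
    have := castInj h0 (by omega) (by omega) (congrArg Prod.snd h)
    omega
  · rw [fgen_zo ha2 ha1, fgen_top hb1] at h
    exact absurd h (fun h => efst _ _ h.symm)
  · omega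
  · omega
  · rw [fgen_mid ha1 ha2, fgen_mid hb1 hb2] at h
    have := castInj h0 (by omega) (by omega) (congrArg Prod.snd h)
    omega
  · rw [fgen_mid ha1 ha2, fgen_top hb1] at h
    exact absurd h (fun h => efst _ _ h.symm)
  · omega
  · omega
  · omega
  · rw [fgen_top ha1, fgen_top hb1] at h
    have := castInj h0 (by omega) (by omega) (congrArg Prod.snd h)
    omega

lemma fgen_close {n : ℕ} (hn : 4 ≤ n) : fgen n (4 * n) = fgen n 0 := by
  rw [fgen_top (by omega), fgen_ze (by omega) (by omega),
    show 4 * n - 3 * n = n from by omega, show 0 / 2 = 0 from rfl,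
    ZMod.natCast_self, Nat.cast_zero]

theorem gen5 {n : ℕ} (hn : 5 ≤ n) : HasLSA4EulerianCircuit (Antiprism n) := by
  have hn4 : 4 ≤ n := by omega
  apply hasCircuit_of_seq (Antiprism n) (fgen n) (4 * n) (by omega)
  · exact fun p hp => fgen_adj hn4 hp
  · exact fgen_close hn4
  · exact fun p q hp hq h => fgen_inj hn4 hp hq h
  · exact fun e he => fgen_surj hn4 e he
  · exact fun a b ha hb hab h => fgen_gap hn ha hb hab h



def circ4 : List (Fin 2 × ZMod 4) :=
  [(0,0),(0,1),(0,2),(1,1),(1,0),(0,0),(0,3),(0,2),(1,2),(1,3),(1,0),(0,1),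
   (1,1),(1,2),(0,3),(1,3),(0,0)]

def f4 (p : ℕ) : Fin 2 × ZMod 4 := circ4.getD p (0,0)

lemma f4_adj : ∀ p, p < 16 → (Antiprism 4).Adj (f4 p) (f4 (p + 1)) := by
  simp only [adj_iff]
  decide

lemma f4_close : f4 16 = f4 0 := by decide

lemma f4_inj : ∀ p q, p < 16 → q < 16 →
    s(f4 p, f4 (p + 1)) = s(f4 q, f4 (q + 1)) → p = q := by
  have key : ∀ p, p < 16 → ∀ q, q < 16 →
      s(f4 p, f4 (p + 1)) = s(f4 q, f4 (q + 1)) → p = q := by decide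
  exact fun p q hp hq h => key p hp q hq h

lemma f4_surj : ∀ e, e ∈ (Antiprism 4).edgeSet →
    ∃ p, p < 16 ∧ e = s(f4 p, f4 (p + 1)) := by
  have key : ∀ a b : Fin 2 × ZMod 4,
      (((a.1 = b.1 ∧ b.2 = a.2 + 1) ∨ (a.1 = 0 ∧ b.1 = 1 ∧ (b.2 = a.2 ∨ a.2 = b.2 + 1))) ∨
       ((b.1 = a.1 ∧ a.2 = b.2 + 1) ∨ (b.1 = 0 ∧ a.1 = 1 ∧ (a.2 = b.2 ∨ b.2 = a.2 + 1)))) →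
      ∃ p : Fin 16, s(a, b) = s(f4 (p : ℕ), f4 ((p : ℕ) + 1)) := by decide
  intro e he
  induction e using Sym2.ind with
  | _ a b =>
    rw [SimpleGraph.mem_edgeSet, adj_iff] at he
    obtain ⟨p, hp⟩ := key a b he.2
    exact ⟨(p : ℕ), p.isLt, hp⟩

lemma f4_gap : ∀ a b, a < 16 → b < 16 → a < b → f4 a = f4 b →
    4 < b - a ∧ b - a + 4 < 16 := by
  have key : ∀ a, a < 16 → ∀ b, b < 16 → a < b → f4 a = f4 b →
      4 < b - a ∧ b - a + 4 < 16 := by decide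
  exact fun a b ha hb => key a ha b hb


/-- For every integer `n ≥ 4`, the `n`-antiprism admits a 4-locally
self-avoiding Eulerian circuit. -/
theorem antiprism_has_LSA4_eulerian_circuit :
    ∀ n : ℕ, 4 ≤ n → HasLSA4EulerianCircuit (Antiprism n) := by
  intro n hn
  rcases eq_or_lt_of_le hn with h | h
  · cases h
    exact hasCircuit_of_seq (Antiprism 4) f4 16 (by omega) f4_adj f4_close f4_inj f4_surj f4_gap
  · exact gen5 h

end Quartic
end

section
/- Let H be a simple graph with a vertex x whose neighbourhood is exactly {a, b, c, d}, where a, b, c, d are pairwise distinct. Let G be the simple graph obtained from H by deleting the edges xa, xb, xc, xd, adding four new vertices e, f, g, h, and adding the twelve edges xe, xf, xg, xh, ef, fg, gh, he, ae, bf, cg, dh (the 4-cycle addition operation at x). If H admits a 4-locally self-avoiding Eulerian circuit, then so does G. -/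
set_option linter.all false
set_option maxHeartbeats 1000000


open SimpleGraph

namespace Quartic

variable {V : Type*}

section AuxGeneric

variable {α : Type*}

lemma nodup_getElem?_ne {l : List α} (h : l.Nodup) {i j : ℕ} (hij : i ≠ j)
    (hi : i < l.length) (hj : j < l.length) : l[i]? ≠ l[j]? := by
  rw [List.getElem?_eq_getElem hi, List.getElem?_eq_getElem hj]
  intro hcon
  exact hij ((h.getElem_inj_iff).mp (Option.some.inj hcon))

lemma cyclic_rotate {l : List α} {k i t : ℕ}
    (h : CyclicShortSubcycleAt (l.rotate k) i t) : CyclicShortSubcycleAt l (i + k) t := by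
  obtain ⟨h1, h2, h3, h4, h5⟩ := h
  rw [List.length_rotate] at h3 h4 h5
  have hn : 0 < l.length := lt_of_lt_of_le h1 h3
  have key : ∀ j : ℕ, (l.rotate k)[j % l.length]? = l[(j + k) % l.length]? := by
    intro j
    rw [List.getElem?_rotate (Nat.mod_lt _ hn), Nat.mod_add_mod]
  refine ⟨h1, h2, h3, ?_, ?_⟩
  · rw [key, key] at h4
    have e1 : i + t + k = i + k + t := by omega
    rw [e1] at h4
    exact h4
  · intro p q hpq hqt
    have := h5 p q hpq hqt
    rw [key, key] at this
    have e1 : i + p + k = i + k + p := by omega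
    have e2 : i + q + k = i + k + q := by omega
    rw [e1, e2] at this
    exact this

lemma cyclic_isRotated {l l' : List α} (h : l ~r l')
    (hs : ∃ i t, CyclicShortSubcycleAt l' i t) : ∃ i t, CyclicShortSubcycleAt l i t := by
  obtain ⟨k, rfl⟩ := h
  obtain ⟨i, t, hs⟩ := hs
  exact ⟨i + k, t, cyclic_rotate hs⟩

lemma dropLast_isRotated_tail : ∀ (l : List α), l.getLast? = l.head? → l.dropLast ~r l.tail
  | [], _ => by simp
  | [u], _ => by simp
  | u :: b :: L, h => by
    rw [List.getLast?_cons_cons, List.head?_cons] at h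
    refine ⟨1, ?_⟩
    rw [List.dropLast_cons₂, List.rotate_cons_succ, List.rotate_zero]
    exact List.dropLast_append_getLast? u h

lemma exists_cyclic_of_eq {l : List α} (hl : 4 ≤ l.length) :
    ∀ t, 1 ≤ t → t ≤ 4 → ∀ p, l[p % l.length]? = l[(p + t) % l.length]? →
      ∃ i t', CyclicShortSubcycleAt l i t' := by
  intro t
  induction t using Nat.strong_induction_on with
  | _ t ih =>
    intro ht1 ht4 p hp
    by_cases hd : ∀ p' q', p' < q' → q' < t →
        l[(p + p') % l.length]? ≠ l[(p + q') % l.length]?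
    · exact ⟨p, t, ht1, ht4, le_trans ht4 hl, hp, hd⟩
    · push_neg at hd
      obtain ⟨p', q', hpq, hqt, heq⟩ := hd
      refine ih (q' - p') (by omega) (by omega) (by omega) (p + p') ?_
      have e1 : p + p' + (q' - p') = p + q' := by omega
      rw [e1]
      exact heq

open SimpleGraph in
lemma support_dropLast_isRotated {G : SimpleGraph α} {u : α} (c : G.Walk u u) :
    c.support.dropLast ~r c.support.tail := by
  apply dropLast_isRotated_tail
  rw [List.getLast?_eq_getLast (by simp), c.getLast_support,
    List.head?_eq_head (by simp), c.head_support]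

open SimpleGraph in
lemma CircuitLSA4.rotate [DecidableEq α] {G : SimpleGraph α} {u x : α} {c : G.Walk u u}
    (h : CircuitLSA4 c) (hx : x ∈ c.support) : CircuitLSA4 (c.rotate x hx) := by
  intro hs
  apply h
  refine cyclic_isRotated ?_ hs
  exact ((support_dropLast_isRotated c).trans ((c.support_rotate x hx).symm)).trans
    ((support_dropLast_isRotated _).symm)

open SimpleGraph in
lemma two_mul_count_support {G : SimpleGraph α} [DecidableEq α] (x : α) :
    ∀ {u v : α} (P : G.Walk u v),
      2 * P.support.count x
        = P.edges.countP (fun e => decide (x ∈ e))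
          + (if u = x then 1 else 0) + (if v = x then 1 else 0) := by
  intro u v P
  induction P with
  | nil => rename_i w; by_cases hw : w = x <;> simp [hw, List.count_singleton]
  | @cons u v' w h P ih =>
    have hmem : (x ∈ s(u, v')) ↔ (u = x ∨ v' = x) :=
      ⟨fun hh => (Sym2.mem_iff.mp hh).imp Eq.symm Eq.symm,
       fun hh => Sym2.mem_iff.mpr (hh.imp Eq.symm Eq.symm)⟩
    by_cases hux : u = x
    · by_cases hvx : v' = x
      · exact absurd (hux.trans hvx.symm) h.ne
      · by_cases hwx : w = x <;>
          simp [List.count_cons, List.countP_cons, Sym2.mem_iff, hux, hvx,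
            Ne.symm hvx, hwx] at ih ⊢ <;> omega
    · by_cases hvx : v' = x
      · by_cases hwx : w = x <;>
          simp [List.count_cons, List.countP_cons, Sym2.mem_iff, hux, Ne.symm hux,
            hvx, hwx] at ih ⊢ <;> omega
      · by_cases hwx : w = x <;>
          simp [List.count_cons, List.countP_cons, Sym2.mem_iff, hux, Ne.symm hux,
            hvx, Ne.symm hvx, hwx] at ih ⊢ <;> omega

end AuxGeneric


section Main

open SimpleGraph Walk

variable {V : Type}

/-- The twelve new (gadget) edges. -/
def gadgetList (x a b c d : V) : List (Sym2 (V ⊕ Fin 4)) :=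
  [s(Sum.inl x, Sum.inr 0), s(Sum.inl x, Sum.inr 1), s(Sum.inl x, Sum.inr 2),
   s(Sum.inl x, Sum.inr 3),
   s(Sum.inr 0, Sum.inr 1), s(Sum.inr 1, Sum.inr 2), s(Sum.inr 2, Sum.inr 3),
   s(Sum.inr 3, Sum.inr 0),
   s(Sum.inl a, Sum.inr 0), s(Sum.inl b, Sum.inr 1), s(Sum.inl c, Sum.inr 2),
   s(Sum.inl d, Sum.inr 3)]

lemma no_inl_eq_gadget {x a b c d : V} (e' : Sym2 V) (E : Sym2 (V ⊕ Fin 4))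
    (hE : E ∈ gadgetList x a b c d) : Sym2.map Sum.inl e' ≠ E := by
  have hform : ∃ (w : V ⊕ Fin 4) (i : Fin 4), E = s(w, Sum.inr i) := by
    simp only [gadgetList, List.mem_cons, List.not_mem_nil, or_false] at hE
    rcases hE with rfl|rfl|rfl|rfl|rfl|rfl|rfl|rfl|rfl|rfl|rfl|rfl <;> exact ⟨_, _, rfl⟩
  obtain ⟨w, i, rfl⟩ := hform
  induction e' using Sym2.ind with
  | _ p q => simp [Sym2.map_pair_eq, Sym2.eq_iff]

lemma assemble [DecidableEq V] {H : SimpleGraph V} {x a b c d : V}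
    {G : SimpleGraph (V ⊕ Fin 4)}
    (hN : H.neighborSet x = {a, b, c, d})
    (hG1 : ∀ v w : V, G.Adj (Sum.inl v) (Sum.inl w) ↔
      (H.Adj v w ∧ s(v, w) ∉ ({s(x, a), s(x, b), s(x, c), s(x, d)} : Set (Sym2 V))))
    (hG2 : ∀ (v : V) (i : Fin 4), G.Adj (Sum.inl v) (Sum.inr i) ↔
      (v = x ∨ (i = 0 ∧ v = a) ∨ (i = 1 ∧ v = b) ∨ (i = 2 ∧ v = c) ∨ (i = 3 ∧ v = d)))
    (hG3 : ∀ i j : Fin 4, G.Adj (Sum.inr i) (Sum.inr j) ↔ (j = i + 1 ∨ i = j + 1))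
    {a₁ b₁ a₂ b₂ : V}
    (h₁ : H.Adj x a₁) (h₂ : H.Adj b₁ x) (h₃ : H.Adj x a₂) (h₄ : H.Adj b₂ x)
    (A : H.Walk a₁ b₁) (B : H.Walk a₂ b₂)
    (hxA : x ∉ A.support) (hxB : x ∉ B.support)
    (W' : H.Walk x x)
    (hW' : W' = Walk.cons h₁ ((A.append (Walk.cons h₂ Walk.nil)).append
        (Walk.cons h₃ (B.append (Walk.cons h₄ Walk.nil)))))
    (htr : W'.IsTrail) (heu : ∀ e, e ∈ H.edgeSet ↔ e ∈ W'.edges) (hlsa : CircuitLSA4 W')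
    (r1 : G.Walk (Sum.inl b₁) (Sum.inl a₂)) (r2 : G.Walk (Sum.inl b₂) (Sum.inl a₁))
    (m1 m2 : List (V ⊕ Fin 4))
    (hr1 : r1.support = Sum.inl b₁ :: (m1 ++ [Sum.inl a₂]))
    (hr2 : r2.support = Sum.inl b₂ :: (m2 ++ [Sum.inl a₁]))
    (hm1g : ∀ z ∈ m1, z = Sum.inl x ∨ ∃ i : Fin 4, z = Sum.inr i)
    (hm2g : ∀ z ∈ m2, z = Sum.inl x ∨ ∃ i : Fin 4, z = Sum.inr i)
    (hm1nd : m1.Nodup) (hm2nd : m2.Nodup)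
    (hm1len : m1.length = 5) (hm2len : m2.length = 5)
    (hgcov : ∀ E ∈ gadgetList x a b c d, E ∈ r1.edges ∨ E ∈ r2.edges)
    (hgsub : ∀ E, E ∈ r1.edges ∨ E ∈ r2.edges → E ∈ gadgetList x a b c d)
    (hgnd : (r1.edges ++ r2.edges).Nodup) :
    HasLSA4EulerianCircuit G := by
  subst hW'
  -- notation
  set xE : Set (Sym2 V) := {s(x, a), s(x, b), s(x, c), s(x, d)} with hxEdef
  -- neighbours of x
  have hnbr : ∀ y : V, H.Adj x y → (y = a ∨ y = b ∨ y = c ∨ y = d) := by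
    intro y hy
    have : y ∈ H.neighborSet x := hy
    rw [hN] at this
    simpa using this
  -- the deleted-edge graph and the lift
  have homadj : ∀ {v w : V}, (H.deleteEdges xE).Adj v w → G.Adj (Sum.inl v) (Sum.inl w) := by
    intro v w hvw
    rw [SimpleGraph.deleteEdges_adj] at hvw
    exact (hG1 v w).mpr ⟨hvw.1, hvw.2⟩
  let hom : (H.deleteEdges xE) →g G := ⟨Sum.inl, fun hvw => homadj hvw⟩
  have homcoe : ∀ v : V, hom v = Sum.inl v := fun _ => rfl
  have hmemdel : ∀ (u v : V) (P : H.Walk u v), x ∉ P.support →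
      ∀ e ∈ P.edges, e ∈ (H.deleteEdges xE).edgeSet := by
    intro u v P hxP e he
    rw [SimpleGraph.edgeSet_deleteEdges]
    refine ⟨P.edges_subset_edgeSet he, ?_⟩
    intro hmem
    apply hxP
    have : e = s(x, a) ∨ e = s(x, b) ∨ e = s(x, c) ∨ e = s(x, d) := by
      simpa [hxEdef] using hmem
    rcases this with rfl|rfl|rfl|rfl <;> exact P.fst_mem_support_of_mem_edges he
  let A' : G.Walk (Sum.inl a₁) (Sum.inl b₁) :=
    (A.transfer (H.deleteEdges xE) (hmemdel _ _ A hxA)).map hom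
  let B' : G.Walk (Sum.inl a₂) (Sum.inl b₂) :=
    (B.transfer (H.deleteEdges xE) (hmemdel _ _ B hxB)).map hom
  have hA'sup : A'.support = A.support.map Sum.inl := by
    simp only [A', Walk.support_map, Walk.support_transfer]
    rfl
  have hB'sup : B'.support = B.support.map Sum.inl := by
    simp only [B', Walk.support_map, Walk.support_transfer]
    rfl
  have hA'edges : A'.edges = A.edges.map (Sym2.map Sum.inl) := by
    simp only [A', Walk.edges_map, Walk.edges_transfer]
    rfl
  have hB'edges : B'.edges = B.edges.map (Sym2.map Sum.inl) := by
    simp only [B', Walk.edges_map, Walk.edges_transfer]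
    rfl
  -- the new circuit
  let Wnew : G.Walk (Sum.inl a₁) (Sum.inl a₁) := A'.append (r1.append (B'.append r2))
  set Wd : H.Walk x x := Walk.cons h₁ ((A.append (Walk.cons h₂ Walk.nil)).append
      (Walk.cons h₃ (B.append (Walk.cons h₄ Walk.nil)))) with hWddef
  -- lengths
  set la := A.length with hladef
  set lb := B.length with hlbdef
  have hAslen : A.support.length = la + 1 := by rw [Walk.length_support]
  have hBslen : B.support.length = lb + 1 := by rw [Walk.length_support]
  -- edges of the old circuit
  have hWdedges : Wd.edges
      = s(x, a₁) :: (A.edges ++ (s(b₁, x) :: (s(x, a₂) :: (B.edges ++ [s(b₂, x)])))) := by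
    simp [hWddef, Walk.edges_append, Walk.edges_cons]
  -- support of the old circuit
  have hWdsup : Wd.support = ((x :: A.support) ++ (x :: B.support)) ++ [x] := by
    simp [hWddef, Walk.support_append, Walk.support_cons]
  set D0 : List V := (x :: A.support) ++ (x :: B.support) with hD0def
  have hD0 : Wd.support.dropLast = D0 := by rw [hWdsup, List.dropLast_concat]
  have hD0len : D0.length = la + lb + 4 := by
    simp [hD0def, hAslen, hBslen]; omega
  -- old edges, mapped
  set OA : List (Sym2 (V ⊕ Fin 4)) := A.edges.map (Sym2.map Sum.inl) with hOAdef
  set OB : List (Sym2 (V ⊕ Fin 4)) := B.edges.map (Sym2.map Sum.inl) with hOBdef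
  have hWnewedges : Wnew.edges = OA ++ (r1.edges ++ (OB ++ r2.edges)) := by
    simp only [Wnew, Walk.edges_append, hA'edges, hB'edges, hOAdef, hOBdef]
  -- new support
  have hWnewsup : Wnew.support
      = ((A.support.map Sum.inl ++ (m1 ++ ((B.support.map Sum.inl) ++ m2)))) ++ [Sum.inl a₁] := by
    have h1 : Wnew.support = A'.support ++ (r1.support.tail ++ (B'.support.tail ++ r2.support.tail)) := by
      simp [Wnew, Walk.support_append, Walk.tail_support_append]
    rw [h1, hA'sup, hB'sup, hr1, hr2]
    rw [show (B.support.map Sum.inl) = Sum.inl a₂ :: (B.support.tail.map Sum.inl) by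
      rw [← List.map_cons, ← Walk.support_eq_cons]]
    simp
  set SA : List (V ⊕ Fin 4) := A.support.map Sum.inl with hSAdef
  set SB : List (V ⊕ Fin 4) := B.support.map Sum.inl with hSBdef
  set S : List (V ⊕ Fin 4) := SA ++ (m1 ++ (SB ++ m2)) with hSdef
  have hWnewdrop : Wnew.support.dropLast = S := by
    rw [hWnewsup, List.dropLast_concat]
  have hSAlen : SA.length = la + 1 := by simp [hSAdef, hAslen]
  have hSBlen : SB.length = lb + 1 := by simp [hSBdef, hBslen]
  have hSlen : S.length = la + lb + 12 := by
    simp [hSdef, hSAlen, hSBlen, hm1len, hm2len]; omega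
  -- membership facts about the supports
  have hxa₁ : x ≠ a₁ := h₁.ne
  have hxb₁ : x ≠ b₁ := h₂.ne'
  have hxa₂ : x ≠ a₂ := h₃.ne
  have hxb₂ : x ≠ b₂ := h₄.ne'
  -- nodup components of the old trail
  have hWdnodup := htr.edges_nodup
  rw [hWdedges] at hWdnodup
  have hABn : (A.edges ++ (s(b₁, x) :: (s(x, a₂) :: (B.edges ++ [s(b₂, x)])))).Nodup :=
    (List.nodup_cons.mp hWdnodup).2
  have hAnd : A.edges.Nodup := hABn.of_append_left
  have hBnd : B.edges.Nodup :=
    ((List.nodup_cons.mp ((List.nodup_cons.mp hABn.of_append_right).2)).2).of_append_left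
  have hABdisj : ∀ e ∈ A.edges, e ∉ B.edges := by
    have hd := List.disjoint_of_nodup_append hABn
    intro e heA heB
    exact hd heA (by simp [heB])
  have hinj : Function.Injective (Sym2.map (Sum.inl : V → V ⊕ Fin 4)) :=
    Sym2.map.injective Sum.inl_injective
  refine ⟨Sum.inl a₁, Wnew, ⟨?_, ?_⟩, ?_⟩
  · -- Trail
    rw [Walk.isTrail_def, hWnewedges]
    have hr1nd : r1.edges.Nodup := hgnd.of_append_left
    have hr2nd : r2.edges.Nodup := hgnd.of_append_right
    have hr12d : List.Disjoint r1.edges r2.edges := List.disjoint_of_nodup_append hgnd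
    have hOAnd : OA.Nodup := hAnd.map hinj
    have hOBnd : OB.Nodup := hBnd.map hinj
    have hold_gad : ∀ E, (E ∈ OA ∨ E ∈ OB) → (E ∈ r1.edges ∨ E ∈ r2.edges) → False := by
      rintro E h1 h2
      have hgg := hgsub E h2
      rcases h1 with h1 | h1 <;>
        · obtain ⟨e', -, rfl⟩ := List.mem_map.mp h1
          exact no_inl_eq_gadget e' _ hgg rfl
    have hOAOB : List.Disjoint OA OB := by
      intro E h1 h2
      obtain ⟨e1, he1, rfl⟩ := List.mem_map.mp h1
      obtain ⟨e2, he2, he⟩ := List.mem_map.mp h2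
      exact hABdisj e1 he1 ((hinj he) ▸ he2)
    refine hOAnd.append ((hr1nd.append (hOBnd.append hr2nd ?_) ?_)) ?_
    · intro E hX hY
      exact hold_gad E (Or.inr hX) (Or.inr hY)
    · intro E hX hY
      rcases List.mem_append.mp hY with hY | hY
      · exact hold_gad E (Or.inr hY) (Or.inl hX)
      · exact hr12d hX hY
    · intro E hX hY
      rcases List.mem_append.mp hY with hY | hY
      · exact hold_gad E (Or.inl hX) (Or.inl hY)
      rcases List.mem_append.mp hY with hY | hY
      · exact hOAOB hX hY
      · exact hold_gad E (Or.inl hX) (Or.inr hY)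
  · -- Eulerian
    intro E
    induction E using Sym2.ind with
    | _ p q =>
      constructor
      · intro hE
        rw [SimpleGraph.mem_edgeSet] at hE
        have hmem : s(p, q) ∈ OA ∨ s(p, q) ∈ r1.edges ∨ s(p, q) ∈ OB ∨ s(p, q) ∈ r2.edges := by
          have main : ∀ (v : V) (j : Fin 4), G.Adj (Sum.inl v) (Sum.inr j) →
              (s(Sum.inl v, Sum.inr j) ∈ r1.edges ∨ s(Sum.inl v, Sum.inr j) ∈ r2.edges) := by
            intro v j hvj
            apply hgcov
            rw [hG2] at hvj
            rcases hvj with rfl | ⟨rfl, rfl⟩ | ⟨rfl, rfl⟩ | ⟨rfl, rfl⟩ | ⟨rfl, rfl⟩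
            · fin_cases j <;> simp [gadgetList]
            all_goals simp [gadgetList]
          rcases p with v | i <;> rcases q with w | j
          · -- inl, inl
            rw [hG1] at hE
            obtain ⟨hvw, hnx⟩ := hE
            have hW : s(v, w) ∈ Wd.edges := (heu _).mp hvw
            rw [hWdedges] at hW
            simp only [List.mem_cons, List.mem_append, List.mem_singleton,
              List.not_mem_nil, or_false] at hW
            have hAB : s(v, w) ∈ A.edges ∨ s(v, w) ∈ B.edges := by
              rcases hW with h|h|h|h|h|h
              · exfalso; apply hnx; rw [h]
                rcases hnbr a₁ h₁ with rfl|rfl|rfl|rfl <;> simp [hxEdef]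
              · exact Or.inl h
              · exfalso; apply hnx; rw [h]
                rcases hnbr b₁ h₂.symm with rfl|rfl|rfl|rfl <;> simp [hxEdef, Sym2.eq_iff]
              · exfalso; apply hnx; rw [h]
                rcases hnbr a₂ h₃ with rfl|rfl|rfl|rfl <;> simp [hxEdef]
              · exact Or.inr h
              · exfalso; apply hnx; rw [h]
                rcases hnbr b₂ h₄.symm with rfl|rfl|rfl|rfl <;> simp [hxEdef, Sym2.eq_iff]
            rcases hAB with h | h
            · exact Or.inl (List.mem_map.mpr ⟨_, h, by simp⟩)
            · exact Or.inr (Or.inr (Or.inl (List.mem_map.mpr ⟨_, h, by simp⟩)))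
          · rcases main v j hE with h | h
            · exact Or.inr (Or.inl h)
            · exact Or.inr (Or.inr (Or.inr h))
          · rw [Sym2.eq_swap]
            rcases main w i hE.symm with h | h
            · exact Or.inr (Or.inl h)
            · exact Or.inr (Or.inr (Or.inr h))
          · have hg : s(Sum.inr i, Sum.inr j) ∈ gadgetList x a b c d := by
              rw [hG3] at hE
              fin_cases i <;> fin_cases j <;>
                first
                  | (exfalso; revert hE; decide)
                  | simp [gadgetList, Sym2.eq_iff]
            rcases hgcov _ hg with h | h
            · exact Or.inr (Or.inl h)
            · exact Or.inr (Or.inr (Or.inr h))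
        rw [hWnewedges]
        simp only [List.mem_append]
        tauto
      · intro hE
        exact Wnew.edges_subset_edgeSet hE
  · -- LSA4
    have hne1 : a₁ ≠ b₁ := by
      intro h
      subst h
      apply (List.nodup_cons.mp hWdnodup).1
      rw [show s(x, a₁) = s(a₁, x) from Sym2.eq_swap]
      simp
    have hne2 : a₂ ≠ b₂ := by
      intro h
      have hsub : (s(x, a₂) :: (B.edges ++ [s(b₂, x)])).Nodup :=
        (List.nodup_cons.mp hABn.of_append_right).2
      apply (List.nodup_cons.mp hsub).1
      rw [show s(x, a₂) = s(b₂, x) from by rw [h]; exact Sym2.eq_swap]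
      simp
    have hla1 : 1 ≤ la := by
      rcases Nat.eq_zero_or_pos la with h0 | h
      · exact absurd (Walk.eq_of_length_eq_zero h0) hne1
      · exact h
    have hlb1 : 1 ≤ lb := by
      rcases Nat.eq_zero_or_pos lb with h0 | h
      · exact absurd (Walk.eq_of_length_eq_zero h0) hne2
      · exact h
    have hCy : ¬ ∃ i t, CyclicShortSubcycleAt D0 i t := by
      rw [← hD0]; exact hlsa
    have Hle : ∀ p t, 1 ≤ t → t ≤ 4 → D0[(p % D0.length)]? ≠ D0[((p + t) % D0.length)]? := by
      intro p t h1 h4 heq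
      apply hCy
      apply exists_cyclic_of_eq (by rw [hD0len]; omega) t h1 h4 p
      exact heq
    have hgA : ∀ k, k < la + 1 → S[k]? = (A.support[k]?).map Sum.inl := by
      intro k hk
      rw [hSdef, List.getElem?_append_left (by rw [hSAlen]; omega), hSAdef, List.getElem?_map]
    have hgm1 : ∀ k, k < 5 → S[la + 1 + k]? = m1[k]? := by
      intro k hk
      rw [hSdef, List.getElem?_append_right (by rw [hSAlen]; omega), hSAlen,
        show la + 1 + k - (la + 1) = k from by omega]
      exact List.getElem?_append_left (by rw [hm1len]; omega)
    have hgB : ∀ k, k < lb + 1 → S[la + 6 + k]? = (B.support[k]?).map Sum.inl := by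
      intro k hk
      rw [hSdef, List.getElem?_append_right (by rw [hSAlen]; omega), hSAlen,
        show la + 6 + k - (la + 1) = 5 + k from by omega,
        List.getElem?_append_right (by rw [hm1len]; omega), hm1len,
        show 5 + k - 5 = k from by omega,
        List.getElem?_append_left (by rw [hSBlen]; omega), hSBdef, List.getElem?_map]
    have hgm2 : ∀ k, k < 5 → S[la + lb + 7 + k]? = m2[k]? := by
      intro k hk
      rw [hSdef, List.getElem?_append_right (by rw [hSAlen]; omega), hSAlen,
        show la + lb + 7 + k - (la + 1) = 5 + (lb + 1 + k) from by omega,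
        List.getElem?_append_right (by rw [hm1len]; omega), hm1len,
        show 5 + (lb + 1 + k) - 5 = lb + 1 + k from by omega,
        List.getElem?_append_right (by rw [hSBlen]; omega), hSBlen,
        show lb + 1 + k - (lb + 1) = k from by omega]
    have hd0 : D0[(0 : ℕ)]? = some x := by
      rw [hD0def, List.getElem?_append_left (by simp), List.getElem?_cons_zero]
    have hdx : D0[la + 2]? = some x := by
      rw [hD0def, List.getElem?_append_right (by simp [hAslen])]
      have hlen : (x :: A.support).length = la + 2 := by simp [hAslen]
      rw [hlen, show la + 2 - (la + 2) = 0 from by omega, List.getElem?_cons_zero]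
    have hdA : ∀ k, k < la + 1 → D0[k + 1]? = A.support[k]? := by
      intro k hk
      rw [hD0def, List.getElem?_append_left (by simp [hAslen]; omega), List.getElem?_cons_succ]
    have hdB : ∀ k, k < lb + 1 → D0[la + 3 + k]? = B.support[k]? := by
      intro k hk
      rw [hD0def, List.getElem?_append_right (by simp [hAslen]; omega)]
      have hlen : (x :: A.support).length = la + 2 := by simp [hAslen]
      rw [hlen, show la + 3 + k - (la + 2) = k + 1 from by omega, List.getElem?_cons_succ]
    have hla3 : 3 ≤ la := by
      by_contra hcon
      push_neg at hcon
      apply Hle 0 (la + 2) (by omega) (by omega)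
      rw [hD0len, Nat.zero_mod, Nat.zero_add, Nat.mod_eq_of_lt (by omega), hd0, hdx]
    have hlb3 : 3 ≤ lb := by
      by_contra hcon
      push_neg at hcon
      apply Hle (la + 2) (lb + 2) (by omega) (by omega)
      rw [hD0len, Nat.mod_eq_of_lt (by omega),
        show la + 2 + (lb + 2) = la + lb + 4 from by omega, Nat.mod_self, hdx, hd0]
    have hclash : ∀ (l : List V), x ∉ l → ∀ (mz : List (V ⊕ Fin 4)),
        (∀ z ∈ mz, z = Sum.inl x ∨ ∃ i : Fin 4, z = Sum.inr i) →
        ∀ (j k : ℕ), j < l.length → k < mz.length →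
        (l[j]?).map Sum.inl ≠ mz[k]? := by
      intro l hl mz hmz j k hj hk heq
      rw [List.getElem?_eq_getElem hj, List.getElem?_eq_getElem hk] at heq
      have heq2 : (Sum.inl l[j] : V ⊕ Fin 4) = mz[k] := by simpa using heq
      rcases hmz _ (List.getElem_mem hk) with hz | ⟨i, hz⟩
      · rw [hz] at heq2
        exact hl ((Sum.inl.inj heq2) ▸ List.getElem_mem hj)
      · rw [hz] at heq2
        exact Sum.inl_ne_inr heq2
    have hmnd : ∀ (mz : List (V ⊕ Fin 4)), mz.Nodup → ∀ j k : ℕ, j < mz.length →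
        k < mz.length → j ≠ k → mz[j]? ≠ mz[k]? :=
      fun mz h j k hj hk hjk => nodup_getElem?_ne h hjk hj hk
    have hAA : ∀ jp jq t : ℕ, jp < la + 1 → jq < la + 1 → 1 ≤ t → t ≤ 4 → jq = jp + t →
        A.support[jp]? ≠ A.support[jq]? := by
      intro jp jq t hjp hjq h1 h4 hq heq
      apply Hle (jp + 1) t h1 h4
      rw [hD0len, Nat.mod_eq_of_lt (by omega), Nat.mod_eq_of_lt (by omega),
        hdA jp (by omega), show jp + 1 + t = jq + 1 from by omega, hdA jq (by omega)]
      exact heq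
    have hBB : ∀ jp jq t : ℕ, jp < lb + 1 → jq < lb + 1 → 1 ≤ t → t ≤ 4 → jq = jp + t →
        B.support[jp]? ≠ B.support[jq]? := by
      intro jp jq t hjp hjq h1 h4 hq heq
      apply Hle (la + 3 + jp) t h1 h4
      rw [hD0len, Nat.mod_eq_of_lt (by omega),
        show la + 3 + jp + t = la + 3 + jq from by omega, Nat.mod_eq_of_lt (by omega),
        hdB jp (by omega), hdB jq (by omega)]
      exact heq
    have hMain : ∀ p t : ℕ, p < S.length → 1 ≤ t → t ≤ 4 →
        S[p]? ≠ S[(p + t) % S.length]? := by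
      intro p t hp h1 h4 heq
      rw [hSlen] at hp heq
      by_cases hw : p + t < la + lb + 12
      · rw [Nat.mod_eq_of_lt hw] at heq
        by_cases hp1 : p ≤ la
        · by_cases hq1 : p + t ≤ la
          · rw [hgA p (by omega), hgA (p + t) (by omega)] at heq
            exact hAA p (p + t) t (by omega) (by omega) h1 h4 rfl
              (Option.map_injective Sum.inl_injective heq)
          · obtain ⟨kq, hkq⟩ : ∃ k, p + t = la + 1 + k := ⟨p + t - (la + 1), by omega⟩
            rw [hgA p (by omega), hkq, hgm1 kq (by omega)] at heq
            exact hclash A.support hxA m1 hm1g p kq (by rw [hAslen]; omega)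
              (by rw [hm1len]; omega) heq
        · by_cases hp2 : p ≤ la + 5
          · obtain ⟨kp, hkp⟩ : ∃ k, p = la + 1 + k := ⟨p - (la + 1), by omega⟩
            by_cases hq2 : p + t ≤ la + 5
            · obtain ⟨kq, hkq⟩ : ∃ k, p + t = la + 1 + k := ⟨p + t - (la + 1), by omega⟩
              rw [hkq, hgm1 kq (by omega), hkp, hgm1 kp (by omega)] at heq
              exact hmnd m1 hm1nd kp kq (by rw [hm1len]; omega) (by rw [hm1len]; omega)
                (by omega) heq
            · obtain ⟨kq, hkq⟩ : ∃ k, p + t = la + 6 + k := ⟨p + t - (la + 6), by omega⟩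
              rw [hkq, hgB kq (by omega), hkp, hgm1 kp (by omega)] at heq
              exact hclash B.support hxB m1 hm1g kq kp (by rw [hBslen]; omega)
                (by rw [hm1len]; omega) heq.symm
          · by_cases hp3 : p ≤ la + 6 + lb
            · obtain ⟨kp, hkp⟩ : ∃ k, p = la + 6 + k := ⟨p - (la + 6), by omega⟩
              by_cases hq3 : p + t ≤ la + 6 + lb
              · obtain ⟨kq, hkq⟩ : ∃ k, p + t = la + 6 + k := ⟨p + t - (la + 6), by omega⟩
                rw [hkq, hgB kq (by omega), hkp, hgB kp (by omega)] at heq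
                exact hBB kp kq t (by omega) (by omega) h1 h4 (by omega)
                  (Option.map_injective Sum.inl_injective heq)
              · obtain ⟨kq, hkq⟩ : ∃ k, p + t = la + lb + 7 + k :=
                  ⟨p + t - (la + lb + 7), by omega⟩
                rw [hkq, hgm2 kq (by omega), hkp, hgB kp (by omega)] at heq
                exact hclash B.support hxB m2 hm2g kp kq (by rw [hBslen]; omega)
                  (by rw [hm2len]; omega) heq
            · obtain ⟨kp, hkp⟩ : ∃ k, p = la + lb + 7 + k := ⟨p - (la + lb + 7), by omega⟩
              obtain ⟨kq, hkq⟩ : ∃ k, p + t = la + lb + 7 + k :=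
                ⟨p + t - (la + lb + 7), by omega⟩
              rw [hkq, hgm2 kq (by omega), hkp, hgm2 kp (by omega)] at heq
              exact hmnd m2 hm2nd kp kq (by rw [hm2len]; omega) (by rw [hm2len]; omega)
                (by omega) heq
      · have hmod : (p + t) % (la + lb + 12) = p + t - (la + lb + 12) := by
          rw [Nat.mod_eq_sub_mod (by omega), Nat.mod_eq_of_lt (by omega)]
        rw [hmod] at heq
        obtain ⟨kp, hkp⟩ : ∃ k, p = la + lb + 7 + k := ⟨p - (la + lb + 7), by omega⟩
        obtain ⟨kq, hkq⟩ : ∃ k, p + t - (la + lb + 12) = k := ⟨p + t - (la + lb + 12), rfl⟩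
        rw [hkq, hgA kq (by omega), hkp, hgm2 kp (by omega)] at heq
        exact hclash A.support hxA m2 hm2g kq kp (by rw [hAslen]; omega)
          (by rw [hm2len]; omega) heq.symm
    intro hcon
    obtain ⟨i, t, ht1, ht4, htn, heq, -⟩ := hcon
    rw [hWnewdrop] at htn heq
    have hpos : 0 < S.length := by rw [hSlen]; omega
    apply hMain (i % S.length) t (Nat.mod_lt _ hpos) ht1 ht4
    rw [Nat.mod_add_mod]
    exact heq


/-- A good pair of gadget routes. -/
def RoutePair (x a b c d : V) (G : SimpleGraph (V ⊕ Fin 4)) (p q r s' : V)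
    (r1 : G.Walk (Sum.inl p) (Sum.inl q)) (r2 : G.Walk (Sum.inl r) (Sum.inl s')) : Prop :=
  ∃ m1 m2 : List (V ⊕ Fin 4),
    r1.support = Sum.inl p :: (m1 ++ [Sum.inl q]) ∧
    r2.support = Sum.inl r :: (m2 ++ [Sum.inl s']) ∧
    (∀ z ∈ m1, z = Sum.inl x ∨ ∃ i : Fin 4, z = Sum.inr i) ∧
    (∀ z ∈ m2, z = Sum.inl x ∨ ∃ i : Fin 4, z = Sum.inr i) ∧
    m1.Nodup ∧ m2.Nodup ∧ m1.length = 5 ∧ m2.length = 5 ∧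
    (∀ E ∈ gadgetList x a b c d, E ∈ r1.edges ∨ E ∈ r2.edges) ∧
    (∀ E, E ∈ r1.edges ∨ E ∈ r2.edges → E ∈ gadgetList x a b c d) ∧
    (r1.edges ++ r2.edges).Nodup

lemma RoutePair.swap {x a b c d : V} {G : SimpleGraph (V ⊕ Fin 4)} {p q r s' : V}
    {r1 : G.Walk (Sum.inl p) (Sum.inl q)} {r2 : G.Walk (Sum.inl r) (Sum.inl s')}
    (h : RoutePair x a b c d G p q r s' r1 r2) :
    RoutePair x a b c d G r s' p q r2 r1 := by
  obtain ⟨m1, m2, h1, h2, h3, h4, h5, h6, h7, h8, h9, h10, h11⟩ := h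
  refine ⟨m2, m1, h2, h1, h4, h3, h6, h5, h8, h7, ?_, ?_, ?_⟩
  · intro E hE; exact (h9 E hE).symm
  · intro E hE; exact h10 E hE.symm
  · exact (List.perm_append_comm.nodup_iff).mpr h11

lemma RoutePair.rev1 {x a b c d : V} {G : SimpleGraph (V ⊕ Fin 4)} {p q r s' : V}
    {r1 : G.Walk (Sum.inl p) (Sum.inl q)} {r2 : G.Walk (Sum.inl r) (Sum.inl s')}
    (h : RoutePair x a b c d G p q r s' r1 r2) :
    RoutePair x a b c d G q p r s' r1.reverse r2 := by
  obtain ⟨m1, m2, h1, h2, h3, h4, h5, h6, h7, h8, h9, h10, h11⟩ := h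
  refine ⟨m1.reverse, m2, ?_, h2, ?_, h4, List.nodup_reverse.mpr h5, h6, by simp [h7], h8, ?_, ?_, ?_⟩
  · rw [Walk.support_reverse, h1]
    simp
  · intro z hz; exact h3 z (List.mem_reverse.mp hz)
  · intro E hE
    rcases h9 E hE with h | h
    · exact Or.inl (by rw [Walk.edges_reverse]; exact List.mem_reverse.mpr h)
    · exact Or.inr h
  · intro E hE
    apply h10
    rcases hE with h | h
    · rw [Walk.edges_reverse] at h; exact Or.inl (List.mem_reverse.mp h)
    · exact Or.inr h
  · rw [Walk.edges_reverse]
    exact (((r1.edges.reverse_perm).append (List.Perm.refl r2.edges)).nodup_iff).mpr h11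

lemma RoutePair.rev2 {x a b c d : V} {G : SimpleGraph (V ⊕ Fin 4)} {p q r s' : V}
    {r1 : G.Walk (Sum.inl p) (Sum.inl q)} {r2 : G.Walk (Sum.inl r) (Sum.inl s')}
    (h : RoutePair x a b c d G p q r s' r1 r2) :
    RoutePair x a b c d G p q s' r r1 r2.reverse :=
  h.swap.rev1.swap

section Routes

variable {x a b c d : V} {G : SimpleGraph (V ⊕ Fin 4)}
  (hG2 : ∀ (v : V) (i : Fin 4), G.Adj (Sum.inl v) (Sum.inr i) ↔
      (v = x ∨ (i = 0 ∧ v = a) ∨ (i = 1 ∧ v = b) ∨ (i = 2 ∧ v = c) ∨ (i = 3 ∧ v = d)))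
  (hG3 : ∀ i j : Fin 4, G.Adj (Sum.inr i) (Sum.inr j) ↔ (j = i + 1 ∨ i = j + 1))
  (hxa : x ≠ a) (hxb : x ≠ b) (hxc : x ≠ c) (hxd : x ≠ d)
  (hab : a ≠ b) (hac : a ≠ c) (had : a ≠ d) (hbc : b ≠ c) (hbd : b ≠ d) (hcd : c ≠ d)

include hG2 hG3 hxa hxb hxc hxd hab hac had hbc hbd hcd

lemma routePair_ab_cd :
    ∃ (r1 : G.Walk (Sum.inl a) (Sum.inl b)) (r2 : G.Walk (Sum.inl c) (Sum.inl d)),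
      RoutePair x a b c d G a b c d r1 r2 := by
  -- route1 : a e h g x f b  /  route2 : c g f e x h d
  refine ⟨Walk.cons ((hG2 a 0).mpr (by simp))
    (Walk.cons ((hG3 3 0).mpr (by decide)).symm
    (Walk.cons ((hG3 2 3).mpr (by decide)).symm
    (Walk.cons ((hG2 x 2).mpr (Or.inl rfl)).symm
    (Walk.cons ((hG2 x 1).mpr (Or.inl rfl))
    (Walk.cons ((hG2 b 1).mpr (by simp)).symm Walk.nil))))),
    Walk.cons ((hG2 c 2).mpr (by simp))
    (Walk.cons ((hG3 1 2).mpr (by decide)).symm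
    (Walk.cons ((hG3 0 1).mpr (by decide)).symm
    (Walk.cons ((hG2 x 0).mpr (Or.inl rfl)).symm
    (Walk.cons ((hG2 x 3).mpr (Or.inl rfl))
    (Walk.cons ((hG2 d 3).mpr (by simp)).symm Walk.nil))))), ?_⟩
  refine ⟨[Sum.inr 0, Sum.inr 3, Sum.inr 2, Sum.inl x, Sum.inr 1],
    [Sum.inr 2, Sum.inr 1, Sum.inr 0, Sum.inl x, Sum.inr 3], rfl, rfl, ?_, ?_, ?_, ?_, rfl, rfl,
    ?_, ?_, ?_⟩
  · intro z hz
    simp only [List.mem_cons, List.not_mem_nil, or_false] at hz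
    rcases hz with rfl|rfl|rfl|rfl|rfl
    exacts [Or.inr ⟨_, rfl⟩, Or.inr ⟨_, rfl⟩, Or.inr ⟨_, rfl⟩, Or.inl rfl, Or.inr ⟨_, rfl⟩]
  · intro z hz
    simp only [List.mem_cons, List.not_mem_nil, or_false] at hz
    rcases hz with rfl|rfl|rfl|rfl|rfl
    exacts [Or.inr ⟨_, rfl⟩, Or.inr ⟨_, rfl⟩, Or.inr ⟨_, rfl⟩, Or.inl rfl, Or.inr ⟨_, rfl⟩]
  · simp
  · simp
  · intro E hE
    simp only [gadgetList, List.mem_cons, List.not_mem_nil, or_false] at hE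
    rcases hE with rfl|rfl|rfl|rfl|rfl|rfl|rfl|rfl|rfl|rfl|rfl|rfl <;>
      simp [Walk.edges_cons, Sym2.eq_iff]
  · intro E hE
    rcases hE with hE | hE <;>
    · simp only [Walk.edges_cons, Walk.edges_nil, List.mem_cons, List.not_mem_nil,
        or_false] at hE
      rcases hE with rfl|rfl|rfl|rfl|rfl|rfl <;> simp [gadgetList, Sym2.eq_iff]
  · simp [Walk.edges_cons, List.nodup_cons, Sym2.eq_iff, hxa, hxb, hxc, hxd, hab, hac, had,
      hbc, hbd, hcd, Ne.symm hxa, Ne.symm hxb, Ne.symm hxc, Ne.symm hxd, Ne.symm hab,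
      Ne.symm hac, Ne.symm had, Ne.symm hbc, Ne.symm hbd, Ne.symm hcd]

lemma routePair_ac_bd :
    ∃ (r1 : G.Walk (Sum.inl a) (Sum.inl c)) (r2 : G.Walk (Sum.inl b) (Sum.inl d)),
      RoutePair x a b c d G a c b d r1 r2 := by
  -- route1 : a e f x h g c  /  route2 : b f g x e h d
  refine ⟨Walk.cons ((hG2 a 0).mpr (by simp))
    (Walk.cons ((hG3 0 1).mpr (by decide))
    (Walk.cons ((hG2 x 1).mpr (Or.inl rfl)).symm
    (Walk.cons ((hG2 x 3).mpr (Or.inl rfl))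
    (Walk.cons ((hG3 3 2).mpr (by decide))
    (Walk.cons ((hG2 c 2).mpr (by simp)).symm Walk.nil))))),
    Walk.cons ((hG2 b 1).mpr (by simp))
    (Walk.cons ((hG3 1 2).mpr (by decide))
    (Walk.cons ((hG2 x 2).mpr (Or.inl rfl)).symm
    (Walk.cons ((hG2 x 0).mpr (Or.inl rfl))
    (Walk.cons ((hG3 0 3).mpr (by decide))
    (Walk.cons ((hG2 d 3).mpr (by simp)).symm Walk.nil))))), ?_⟩
  refine ⟨[Sum.inr 0, Sum.inr 1, Sum.inl x, Sum.inr 3, Sum.inr 2],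
    [Sum.inr 1, Sum.inr 2, Sum.inl x, Sum.inr 0, Sum.inr 3], rfl, rfl, ?_, ?_, ?_, ?_, rfl, rfl,
    ?_, ?_, ?_⟩
  · intro z hz
    simp only [List.mem_cons, List.not_mem_nil, or_false] at hz
    rcases hz with rfl|rfl|rfl|rfl|rfl
    exacts [Or.inr ⟨_, rfl⟩, Or.inr ⟨_, rfl⟩, Or.inl rfl, Or.inr ⟨_, rfl⟩, Or.inr ⟨_, rfl⟩]
  · intro z hz
    simp only [List.mem_cons, List.not_mem_nil, or_false] at hz
    rcases hz with rfl|rfl|rfl|rfl|rfl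
    exacts [Or.inr ⟨_, rfl⟩, Or.inr ⟨_, rfl⟩, Or.inl rfl, Or.inr ⟨_, rfl⟩, Or.inr ⟨_, rfl⟩]
  · simp
  · simp
  · intro E hE
    simp only [gadgetList, List.mem_cons, List.not_mem_nil, or_false] at hE
    rcases hE with rfl|rfl|rfl|rfl|rfl|rfl|rfl|rfl|rfl|rfl|rfl|rfl <;>
      simp [Walk.edges_cons, Sym2.eq_iff]
  · intro E hE
    rcases hE with hE | hE <;>
    · simp only [Walk.edges_cons, Walk.edges_nil, List.mem_cons, List.not_mem_nil,
        or_false] at hE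
      rcases hE with rfl|rfl|rfl|rfl|rfl|rfl <;> simp [gadgetList, Sym2.eq_iff]
  · simp [Walk.edges_cons, List.nodup_cons, Sym2.eq_iff, hxa, hxb, hxc, hxd, hab, hac, had,
      hbc, hbd, hcd, Ne.symm hxa, Ne.symm hxb, Ne.symm hxc, Ne.symm hxd, Ne.symm hab,
      Ne.symm hac, Ne.symm had, Ne.symm hbc, Ne.symm hbd, Ne.symm hcd]

lemma routePair_ad_bc :
    ∃ (r1 : G.Walk (Sum.inl a) (Sum.inl d)) (r2 : G.Walk (Sum.inl b) (Sum.inl c)),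
      RoutePair x a b c d G a d b c r1 r2 := by
  -- route1 : a e f g x h d  /  route2 : b f x e h g c
  refine ⟨Walk.cons ((hG2 a 0).mpr (by simp))
    (Walk.cons ((hG3 0 1).mpr (by decide))
    (Walk.cons ((hG3 1 2).mpr (by decide))
    (Walk.cons ((hG2 x 2).mpr (Or.inl rfl)).symm
    (Walk.cons ((hG2 x 3).mpr (Or.inl rfl))
    (Walk.cons ((hG2 d 3).mpr (by simp)).symm Walk.nil))))),
    Walk.cons ((hG2 b 1).mpr (by simp))
    (Walk.cons ((hG2 x 1).mpr (Or.inl rfl)).symm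
    (Walk.cons ((hG2 x 0).mpr (Or.inl rfl))
    (Walk.cons ((hG3 0 3).mpr (by decide))
    (Walk.cons ((hG3 3 2).mpr (by decide))
    (Walk.cons ((hG2 c 2).mpr (by simp)).symm Walk.nil))))), ?_⟩
  refine ⟨[Sum.inr 0, Sum.inr 1, Sum.inr 2, Sum.inl x, Sum.inr 3],
    [Sum.inr 1, Sum.inl x, Sum.inr 0, Sum.inr 3, Sum.inr 2], rfl, rfl, ?_, ?_, ?_, ?_, rfl, rfl,
    ?_, ?_, ?_⟩
  · intro z hz
    simp only [List.mem_cons, List.not_mem_nil, or_false] at hz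
    rcases hz with rfl|rfl|rfl|rfl|rfl
    exacts [Or.inr ⟨_, rfl⟩, Or.inr ⟨_, rfl⟩, Or.inr ⟨_, rfl⟩, Or.inl rfl, Or.inr ⟨_, rfl⟩]
  · intro z hz
    simp only [List.mem_cons, List.not_mem_nil, or_false] at hz
    rcases hz with rfl|rfl|rfl|rfl|rfl
    exacts [Or.inr ⟨_, rfl⟩, Or.inl rfl, Or.inr ⟨_, rfl⟩, Or.inr ⟨_, rfl⟩, Or.inr ⟨_, rfl⟩]
  · simp
  · simp
  · intro E hE
    simp only [gadgetList, List.mem_cons, List.not_mem_nil, or_false] at hE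
    rcases hE with rfl|rfl|rfl|rfl|rfl|rfl|rfl|rfl|rfl|rfl|rfl|rfl <;>
      simp [Walk.edges_cons, Sym2.eq_iff]
  · intro E hE
    rcases hE with hE | hE <;>
    · simp only [Walk.edges_cons, Walk.edges_nil, List.mem_cons, List.not_mem_nil,
        or_false] at hE
      rcases hE with rfl|rfl|rfl|rfl|rfl|rfl <;> simp [gadgetList, Sym2.eq_iff]
  · simp [Walk.edges_cons, List.nodup_cons, Sym2.eq_iff, hxa, hxb, hxc, hxd, hab, hac, had,
      hbc, hbd, hcd, Ne.symm hxa, Ne.symm hxb, Ne.symm hxc, Ne.symm hxd, Ne.symm hab,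
      Ne.symm hac, Ne.symm had, Ne.symm hbc, Ne.symm hbd, Ne.symm hcd]

end Routes

end Main

/-- the 4-cycle addition operation preserves the existence of a 4-locally
self-avoiding Eulerian circuit.  Here `G` lives on `V ⊕ Fin 4`, the four new vertices
being `e = inr 0`, `f = inr 1`, `g = inr 2`, `h = inr 3`; the old edges `xa, xb, xc, xd`
are deleted and the twelve edges `xe, xf, xg, xh, ef, fg, gh, he, ae, bf, cg, dh` are
added. -/
theorem fourCycleAddition_preserves_LSA4 {V : Type} [Fintype V]
    (H : SimpleGraph V) (x a b c d : V)
    (hab : a ≠ b) (hac : a ≠ c) (had : a ≠ d) (hbc : b ≠ c) (hbd : b ≠ d) (hcd : c ≠ d)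
    (hN : H.neighborSet x = {a, b, c, d})
    (G : SimpleGraph (V ⊕ Fin 4))
    (hG1 : ∀ v w : V, G.Adj (Sum.inl v) (Sum.inl w) ↔
      (H.Adj v w ∧ s(v, w) ∉ ({s(x, a), s(x, b), s(x, c), s(x, d)} : Set (Sym2 V))))
    (hG2 : ∀ (v : V) (i : Fin 4), G.Adj (Sum.inl v) (Sum.inr i) ↔
      (v = x ∨ (i = 0 ∧ v = a) ∨ (i = 1 ∧ v = b) ∨ (i = 2 ∧ v = c) ∨ (i = 3 ∧ v = d)))
    (hG3 : ∀ i j : Fin 4, G.Adj (Sum.inr i) (Sum.inr j) ↔ (j = i + 1 ∨ i = j + 1))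
    (hH : HasLSA4EulerianCircuit H) :
    HasLSA4EulerianCircuit G := by
  classical
  obtain ⟨u, W, ⟨htrW, heuW⟩, hlsaW⟩ := hH
  have hadjxa : H.Adj x a := by
    have : a ∈ H.neighborSet x := by rw [hN]; simp
    exact this
  have hadjxb : H.Adj x b := by
    have : b ∈ H.neighborSet x := by rw [hN]; simp
    exact this
  have hadjxc : H.Adj x c := by
    have : c ∈ H.neighborSet x := by rw [hN]; simp
    exact this
  have hadjxd : H.Adj x d := by
    have : d ∈ H.neighborSet x := by rw [hN]; simp
    exact this
  have hxa : x ≠ a := hadjxa.ne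
  have hxb : x ≠ b := hadjxb.ne
  have hxc : x ≠ c := hadjxc.ne
  have hxd : x ≠ d := hadjxd.ne
  have hnbr : ∀ y : V, H.Adj x y → (y = a ∨ y = b ∨ y = c ∨ y = d) := by
    intro y hy
    have : y ∈ H.neighborSet x := hy
    rw [hN] at this
    simpa using this
  have hxW : x ∈ W.support :=
    W.fst_mem_support_of_mem_edges ((heuW _).mp ((SimpleGraph.mem_edgeSet H).mpr hadjxa))
  set W' : H.Walk x x := W.rotate x hxW with hW'def
  have htr' : W'.IsTrail := htrW.rotate hxW
  have heu' : ∀ e, e ∈ H.edgeSet ↔ e ∈ W'.edges := by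
    intro e
    rw [heuW e]
    exact ((W.rotate_edges x hxW).mem_iff).symm
  have hlsa' : CircuitLSA4 W' := CircuitLSA4.rotate hlsaW hxW
  -- count of x in W'.support is 3
  have hfil : List.Perm (W'.edges.filter (fun e => decide (x ∈ e)))
      [s(x, a), s(x, b), s(x, c), s(x, d)] := by
    apply List.perm_of_nodup_nodup_toFinset_eq ((htr'.edges_nodup).filter _)
    · simp [Sym2.eq_iff, hab, hac, had, hbc, hbd, hcd, hxa, hxb, hxc, hxd,
        Ne.symm hxa, Ne.symm hxb, Ne.symm hxc, Ne.symm hxd]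
    · apply Finset.ext
      intro e
      simp only [List.mem_toFinset, List.mem_filter, decide_eq_true_eq, List.mem_cons,
        List.not_mem_nil, or_false]
      constructor
      · rintro ⟨he, hx⟩
        rw [← heu'] at he
        obtain ⟨y, rfl⟩ := Sym2.mem_iff_exists.mp hx
        have hyadj : H.Adj x y := (SimpleGraph.mem_edgeSet H).mp he
        rcases hnbr y hyadj with rfl|rfl|rfl|rfl <;> simp
      · intro he
        rcases he with rfl|rfl|rfl|rfl <;>
          exact ⟨(heu' _).mp ((SimpleGraph.mem_edgeSet H).mpr (by assumption)), by simp⟩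
  have hcountP : W'.edges.countP (fun e => decide (x ∈ e)) = 4 := by
    rw [List.countP_eq_length_filter, hfil.length_eq]
    rfl
  have hsupcount : W'.support.count x = 3 := by
    have h2 := two_mul_count_support (G := H) x W'
    rw [hcountP] at h2
    simp at h2
    omega
  -- decompose W'
  have hxaW' : s(x, a) ∈ W'.edges := (heu' _).mp ((SimpleGraph.mem_edgeSet H).mpr hadjxa)
  have hxbW' : s(x, b) ∈ W'.edges := (heu' _).mp ((SimpleGraph.mem_edgeSet H).mpr hadjxb)
  have hnn : ¬ W'.Nil := by
    intro h
    rw [Walk.nil_iff_length_eq] at h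
    have := W'.length_edges
    rw [h] at this
    rw [List.length_eq_zero_iff.mp this] at hxaW'
    simp at hxaW'
  obtain ⟨a₁, h₁, R₁, hWeq⟩ := Walk.not_nil_iff.mp hnn
  have hxR₁ : x ∈ R₁.support := by
    rw [hWeq, Walk.edges_cons] at hxaW' hxbW'
    rcases List.mem_cons.mp hxaW' with h | h
    · rcases List.mem_cons.mp hxbW' with h' | h'
      · exfalso
        have hh := h.trans h'.symm
        rw [Sym2.eq_iff] at hh
        rcases hh with ⟨-, h2⟩ | ⟨h2, h3⟩
        · exact hab h2
        · exact hab (h3.trans h2)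
      · exact R₁.fst_mem_support_of_mem_edges h'
    · exact R₁.fst_mem_support_of_mem_edges h
  set T : H.Walk a₁ x := R₁.takeUntil x hxR₁ with hTdef
  set D : H.Walk x x := R₁.dropUntil x hxR₁ with hDdef
  have hsplit : T.append D = R₁ := R₁.take_spec hxR₁
  have hcT : T.support.count x = 1 := R₁.count_support_takeUntil_eq_one hxR₁
  have hcR₁ : R₁.support.count x = 2 := by
    have hs : W'.support = x :: R₁.support := by rw [hWeq, Walk.support_cons]
    rw [hs] at hsupcount
    simp [List.count_cons] at hsupcount
    omega
  have hcD : D.support.tail.count x = 1 := by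
    rw [← hsplit, Walk.support_append, List.count_append] at hcR₁
    omega
  have hnnD : ¬ D.Nil := by
    intro h
    rw [Walk.nil_iff_length_eq] at h
    obtain ⟨z, hz⟩ := List.length_eq_one_iff.mp (by rw [D.length_support, h] : D.support.length = 1)
    rw [hz] at hcD
    simp at hcD
  obtain ⟨a₂, h₃, R₂, hDeq⟩ := Walk.not_nil_iff.mp hnnD
  have hcR₂ : R₂.support.count x = 1 := by
    rw [hDeq, Walk.support_cons] at hcD
    simpa using hcD
  -- split T from the back
  have hnnT : ¬ T.reverse.Nil := by
    rw [Walk.nil_iff_length_eq, Walk.length_reverse]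
    intro h
    exact h₁.ne (Walk.eq_of_length_eq_zero h).symm
  obtain ⟨b₁, h₂r, Aq, hTr⟩ := Walk.not_nil_iff.mp hnnT
  have hT : T = Aq.reverse.append (Walk.cons h₂r.symm Walk.nil) := by
    calc T = T.reverse.reverse := (Walk.reverse_reverse T).symm
    _ = (Walk.cons h₂r Aq).reverse := by rw [hTr]
    _ = Aq.reverse.append (Walk.cons h₂r.symm Walk.nil) := Walk.reverse_cons _ _
  set A : H.Walk a₁ b₁ := Aq.reverse with hAdef
  have hxA : x ∉ A.support := by
    have hTsup : T.support = A.support ++ [x] := by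
      rw [hT, Walk.support_append]
      rfl
    rw [hTsup, List.count_append] at hcT
    simp at hcT
    exact List.count_eq_zero.mp hcT
  -- split R₂ from the back
  have hnnR₂ : ¬ R₂.reverse.Nil := by
    rw [Walk.nil_iff_length_eq, Walk.length_reverse]
    intro h
    exact h₃.ne (Walk.eq_of_length_eq_zero h).symm
  obtain ⟨b₂, h₄r, Bq, hRr⟩ := Walk.not_nil_iff.mp hnnR₂
  have hR₂ : R₂ = Bq.reverse.append (Walk.cons h₄r.symm Walk.nil) := by
    calc R₂ = R₂.reverse.reverse := (Walk.reverse_reverse R₂).symm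
    _ = (Walk.cons h₄r Bq).reverse := by rw [hRr]
    _ = Bq.reverse.append (Walk.cons h₄r.symm Walk.nil) := Walk.reverse_cons _ _
  set B : H.Walk a₂ b₂ := Bq.reverse with hBdef
  have hxB : x ∉ B.support := by
    have hRsup : R₂.support = B.support ++ [x] := by
      rw [hR₂, Walk.support_append]
      rfl
    rw [hRsup, List.count_append] at hcR₂
    simp at hcR₂
    exact List.count_eq_zero.mp hcR₂
  -- the final shape of W'
  have hshape : W' = Walk.cons h₁ ((A.append (Walk.cons h₂r.symm Walk.nil)).append
      (Walk.cons h₃ (B.append (Walk.cons h₄r.symm Walk.nil)))) := by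
    rw [hWeq, ← hsplit, hT, hDeq, hR₂]
  -- edge list of W', for distinctness of a₁ b₁ a₂ b₂
  have hWE : W'.edges
      = s(x, a₁) :: (A.edges ++ (s(b₁, x) :: (s(x, a₂) :: (B.edges ++ [s(b₂, x)])))) := by
    rw [hshape]
    simp [Walk.edges_append, Walk.edges_cons]
  have hnd := htr'.edges_nodup
  rw [hWE] at hnd
  have h1n := (List.nodup_cons.mp hnd).1
  have hrest := (List.nodup_cons.mp hnd).2
  have hrest2 : (s(b₁, x) :: (s(x, a₂) :: (B.edges ++ [s(b₂, x)]))).Nodup :=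
    hrest.of_append_right
  have h2n := (List.nodup_cons.mp hrest2).1
  have hrest3 := (List.nodup_cons.mp hrest2).2
  have h3n := (List.nodup_cons.mp hrest3).1
  have ne12 : s(x, a₁) ≠ s(b₁, x) := fun h => h1n (by rw [h]; simp)
  have ne13 : s(x, a₁) ≠ s(x, a₂) := fun h => h1n (by rw [h]; simp)
  have ne14 : s(x, a₁) ≠ s(b₂, x) := fun h => h1n (by rw [h]; simp)
  have ne23 : s(b₁, x) ≠ s(x, a₂) := fun h => h2n (by rw [h]; simp)
  have ne24 : s(b₁, x) ≠ s(b₂, x) := fun h => h2n (by rw [h]; simp)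
  have ne34 : s(x, a₂) ≠ s(b₂, x) := fun h => h3n (by rw [h]; simp)
  have na₁b₁ : a₁ ≠ b₁ := fun h => ne12 (by rw [h]; exact Sym2.eq_swap)
  have na₁a₂ : a₁ ≠ a₂ := fun h => ne13 (by rw [h])
  have na₁b₂ : a₁ ≠ b₂ := fun h => ne14 (by rw [h]; exact Sym2.eq_swap)
  have nb₁a₂ : b₁ ≠ a₂ := fun h => ne23 (by rw [h]; exact Sym2.eq_swap)
  have nb₁b₂ : b₁ ≠ b₂ := fun h => ne24 (by rw [h])
  have na₂b₂ : a₂ ≠ b₂ := fun h => ne34 (by rw [h]; exact Sym2.eq_swap)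
  -- memberships
  have hb₁m : b₁ = a ∨ b₁ = b ∨ b₁ = c ∨ b₁ = d := hnbr b₁ h₂r
  have ha₂m : a₂ = a ∨ a₂ = b ∨ a₂ = c ∨ a₂ = d := hnbr a₂ h₃
  have hb₂m : b₂ = a ∨ b₂ = b ∨ b₂ = c ∨ b₂ = d := hnbr b₂ h₄r
  have ha₁m : a₁ = a ∨ a₁ = b ∨ a₁ = c ∨ a₁ = d := hnbr a₁ h₁
  -- route pair
  have hRP : ∃ (r1 : G.Walk (Sum.inl b₁) (Sum.inl a₂)) (r2 : G.Walk (Sum.inl b₂) (Sum.inl a₁)),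
      RoutePair x a b c d G b₁ a₂ b₂ a₁ r1 r2 := by
    obtain ⟨u1, u2, hu⟩ := routePair_ab_cd hG2 hG3 hxa hxb hxc hxd hab hac had hbc hbd hcd
    obtain ⟨v1, v2, hv⟩ := routePair_ac_bd hG2 hG3 hxa hxb hxc hxd hab hac had hbc hbd hcd
    obtain ⟨w1, w2, hw⟩ := routePair_ad_bc hG2 hG3 hxa hxb hxc hxd hab hac had hbc hbd hcd
    clear hshape hWE hsplit hT hR₂ hDeq hWeq hxA hxB hnd hrest hrest2 hrest3
    rcases hb₁m with rfl|rfl|rfl|rfl <;> rcases ha₂m with rfl|rfl|rfl|rfl <;>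
      rcases hb₂m with rfl|rfl|rfl|rfl <;> rcases ha₁m with rfl|rfl|rfl|rfl <;>
      first
        | exact absurd rfl nb₁a₂
        | exact absurd rfl nb₁b₂
        | exact absurd rfl na₁b₁
        | exact absurd rfl na₂b₂
        | exact absurd rfl na₁a₂
        | exact absurd rfl na₁b₂
        | exact ⟨u1, u2, hu⟩
        | exact ⟨u1.reverse, u2, hu.rev1⟩
        | exact ⟨u1, u2.reverse, hu.rev2⟩
        | exact ⟨u1.reverse, u2.reverse, hu.rev1.rev2⟩
        | exact ⟨u2, u1, hu.swap⟩
        | exact ⟨u2.reverse, u1, hu.rev2.swap⟩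
        | exact ⟨u2, u1.reverse, hu.rev1.swap⟩
        | exact ⟨u2.reverse, u1.reverse, hu.rev1.rev2.swap⟩
        | exact ⟨v1, v2, hv⟩
        | exact ⟨v1.reverse, v2, hv.rev1⟩
        | exact ⟨v1, v2.reverse, hv.rev2⟩
        | exact ⟨v1.reverse, v2.reverse, hv.rev1.rev2⟩
        | exact ⟨v2, v1, hv.swap⟩
        | exact ⟨v2.reverse, v1, hv.rev2.swap⟩
        | exact ⟨v2, v1.reverse, hv.rev1.swap⟩
        | exact ⟨v2.reverse, v1.reverse, hv.rev1.rev2.swap⟩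
        | exact ⟨w1, w2, hw⟩
        | exact ⟨w1.reverse, w2, hw.rev1⟩
        | exact ⟨w1, w2.reverse, hw.rev2⟩
        | exact ⟨w1.reverse, w2.reverse, hw.rev1.rev2⟩
        | exact ⟨w2, w1, hw.swap⟩
        | exact ⟨w2.reverse, w1, hw.rev2.swap⟩
        | exact ⟨w2, w1.reverse, hw.rev1.swap⟩
        | exact ⟨w2.reverse, w1.reverse, hw.rev1.rev2.swap⟩
  obtain ⟨r1, r2, m1, m2, hr1, hr2, hm1g, hm2g, hm1nd, hm2nd, hm1len, hm2len,
    hgcov, hgsub, hgnd⟩ := hRP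
  exact assemble hN hG1 hG2 hG3 h₁ h₂r.symm h₃ h₄r.symm A B hxA hxB W' hshape htr' heu'
    hlsa' r1 r2 m1 m2 hr1 hr2 hm1g hm2g hm1nd hm2nd hm1len hm2len hgcov hgsub hgnd

end Quartic
end

section
/- Let G be a connected simple 4-regular graph with pairwise distinct vertices a, b, c, d such that ab, cd ∈ E(G) and the pair {ab, cd} forms an edge cut of G: deleting the two edges ab and cd disconnects G into exactly two connected components, one containing a and d and the other containing b and c. Let G' be the simple graph obtained from G by deleting the edges ab and cd, adding a new vertex u, and adding the four edges ua, ub, uc, ud (the pegging of the independent 2-edge-cut {ab, cd}). If G admits a 4-locally self-avoiding Eulerian circuit, then so does G'. -/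
open SimpleGraph

namespace Quartic

variable {V : Type*}

variable {X Y : Type*}

lemma C_rotate {l : List X} {k i t : ℕ}
    (h : CyclicShortSubcycleAt (l.rotate k) i t) : CyclicShortSubcycleAt l (i + k) t := by
  obtain ⟨h1, h4, hl, he, hd⟩ := h
  rw [List.length_rotate] at hl he hd
  have hn : 0 < l.length := lt_of_lt_of_le h1 hl
  have key : ∀ j : ℕ, (l.rotate k)[j % l.length]? = l[(j + k) % l.length]? := by
    intro j
    rw [List.getElem?_rotate (Nat.mod_lt _ hn), Nat.mod_add_mod]
  refine ⟨h1, h4, hl, ?_, ?_⟩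
  · have := he
    rw [key i, key (i + t)] at this
    have e1 : i + t + k = i + k + t := by omega
    rwa [e1] at this
  · intro p q hpq hqt
    have := hd p q hpq hqt
    rw [key (i + p), key (i + q)] at this
    have e1 : i + p + k = i + k + p := by omega
    have e2 : i + q + k = i + k + q := by omega
    rwa [e1, e2] at this

lemma C_map {f : X → Y} (hf : Function.Injective f) {l : List X} {i t : ℕ}
    (h : CyclicShortSubcycleAt (l.map f) i t) : CyclicShortSubcycleAt l i t := by
  obtain ⟨h1, h4, hl, he, hd⟩ := h
  rw [List.length_map] at hl he hd
  refine ⟨h1, h4, hl, ?_, ?_⟩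
  · rw [List.getElem?_map, List.getElem?_map] at he
    exact Option.map_injective hf he
  · intro p q hpq hqt hcon
    exact hd p q hpq hqt (by rw [List.getElem?_map, List.getElem?_map, hcon])

variable [DecidableEq X]

private def P (u : X) : X → Bool := fun x => decide (x ≠ u)

lemma filter_eq_self_of_not_mem {u : X} {D : List X} (h : u ∉ D) : D.filter (P u) = D :=
  List.filter_eq_self.2 (fun a ha => by simp [P]; rintro rfl; exact h ha)

lemma aux1 (u : X) : ∀ (m : List X) (k : ℕ), (∀ j, j < k → m[j]? ≠ some u) →
    ∀ j, j < k → (m.filter (P u))[j]? = m[j]? := by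
  intro m
  induction m with
  | nil => intro k _ j _; simp
  | cons x m' ih =>
      intro k hk j hj
      have hx : x ≠ u := by
        intro hxu
        exact hk 0 (by omega) (by simp [hxu])
      have hfil : (x :: m').filter (P u) = x :: m'.filter (P u) := by
        simp [P, hx]
      rw [hfil]
      cases j with
      | zero => simp
      | succ j' =>
          simp only [List.getElem?_cons_succ]
          exact ih (k - 1) (fun j hj' => hk (j + 1) (by omega)) j' (by omega)

lemma aux2 (u : X) : ∀ (m : List X) (p e : ℕ), m[p]? = some u →
    (∀ j, j ≤ p + e → j ≠ p → m[j]? ≠ some u) →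
    ∀ j, j < p + e → (m.filter (P u))[j]? =
      if j < p then m[j]? else m[j + 1]? := by
  intro m
  induction m with
  | nil => intro p e hp; simp at hp
  | cons x m' ih =>
      intro p e hp hno j hj
      cases p with
      | zero =>
          have hx : x = u := by simpa using hp
          have hfil : (x :: m').filter (P u) = m'.filter (P u) := by simp [P, hx]
          rw [hfil]
          simp only [Nat.not_lt_zero, if_neg (Nat.not_lt_zero j)]
          rw [List.getElem?_cons_succ]
          exact aux1 u m' e (fun j' hj' hju => hno (j' + 1) (by omega) (by omega)
            (by simpa using hju)) j (by omega)
      | succ p' =>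
          have hx : x ≠ u := by
            intro hxu
            exact hno 0 (by omega) (by omega) (by simp [hxu])
          have hfil : (x :: m').filter (P u) = x :: m'.filter (P u) := by simp [P, hx]
          rw [hfil]
          cases j with
          | zero =>
                  rw [if_pos (Nat.succ_pos p')]
                  simp
          | succ j' =>
              simp only [List.getElem?_cons_succ]
              have := ih p' e (by simpa using hp)
                (fun j hj' hne => by
                  have := hno (j + 1) (by omega) (by omega)
                  simpa using this) j' (by omega)
              rw [this]
              by_cases hcase : j' < p'
              · rw [if_pos hcase, if_pos (by omega)]
              · rw [if_neg hcase, if_neg (by omega)]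

lemma rotate_append (a b : List X) : (a ++ b).rotate a.length = b ++ a := by
  rw [List.rotate_eq_drop_append_take (by simp)]
  simp

lemma upos (u : X) (A B C : List X) (hA : u ∉ A) (hB : u ∉ B) (hC : u ∉ C) :
    ∀ s, (A ++ ([u] ++ (B ++ ([u] ++ C))))[s]? = some u →
      s = A.length ∨ s = A.length + B.length + 1 := by
  intro s h
  by_cases h1 : s < A.length
  · rw [List.getElem?_append_left h1] at h
    exact absurd (List.mem_of_getElem? h) hA
  · push_neg at h1
    rw [List.getElem?_append_right h1] at h
    rcases Nat.eq_or_lt_of_le h1 with he | hlt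
    · left; omega
    · have h2 : 0 < s - A.length := by omega
      obtain ⟨j, hj⟩ : ∃ j, s - A.length = j + 1 := ⟨s - A.length - 1, by omega⟩
      rw [hj] at h
      have : ([u] ++ (B ++ ([u] ++ C)))[j+1]? = (B ++ ([u] ++ C))[j]? := by
        simp
      rw [this] at h
      by_cases h3 : j < B.length
      · rw [List.getElem?_append_left h3] at h
        exact absurd (List.mem_of_getElem? h) hB
      · push_neg at h3
        rw [List.getElem?_append_right h3] at h
        rcases Nat.eq_or_lt_of_le h3 with he | hlt2
        · right; omega
        · obtain ⟨j', hj'⟩ : ∃ j', j - B.length = j' + 1 := ⟨j - B.length - 1, by omega⟩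
          rw [hj'] at h
          have : ([u] ++ C)[j' + 1]? = C[j']? := by simp
          rw [this] at h
          exact absurd (List.mem_of_getElem? h) hC



set_option maxHeartbeats 1000000 in
lemma noCyclic_insert (u : X) (A B C : List X)
    (hA : u ∉ A) (hB : u ∉ B) (hC : u ∉ C)
    (hBlen : 4 ≤ B.length) (hAC418 : 4 ≤ A.length + C.length)
    (hno : ∀ i t, ¬ CyclicShortSubcycleAt (A ++ (B ++ C)) i t)
    (i t : ℕ) : ¬ CyclicShortSubcycleAt (A ++ ([u] ++ (B ++ ([u] ++ C)))) i t := by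
  intro hcs
  obtain ⟨ht1, ht4, htl, heq, hdist⟩ := hcs
  set l' : List X := A ++ ([u] ++ (B ++ ([u] ++ C))) with hl'def
  set n' : ℕ := l'.length with hn'def
  have hn'v : n' = A.length + B.length + C.length + 2 := by
    simp [hn'def, hl'def]; omega
  have hn'10 : 10 ≤ n' := by omega
  have hn'pos : 0 < n' := by omega
  set s : ℕ := i % n' with hsdef
  have hs : s < n' := Nat.mod_lt _ hn'pos
  set m : List X := l'.rotate s with hmdef
  have hmlen : m.length = n' := by rw [hmdef, List.length_rotate]
  have hget : ∀ p, p < n' → m[p]? = l'[(i + p) % n']? := by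
    intro p hp
    rw [hmdef, List.getElem?_rotate (by rw [← hn'def]; omega)]
    rw [← hn'def, hsdef, Nat.add_comm p (i % n'), Nat.mod_add_mod, Nat.add_comm]
  have htn' : t < n' := by omega
  -- endpoint and distinctness as prefix facts on m
  have hm0 : m[0]? = m[t]? := by
    rw [hget 0 (by omega), hget t htn']
    simpa using heq
  have hmdist : ∀ p q, p < q → q < t → m[p]? ≠ m[q]? := by
    intro p q hpq hqt
    rw [hget p (by omega), hget q (by omega)]
    exact hdist p q hpq hqt
  -- the gap condition
  have hgap : ∀ p q, p < q → q ≤ 4 → m[p]? = some u → m[q]? = some u → False := by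
    intro p q hpq hq4 hpu hqu
    rw [hget p (by omega)] at hpu
    rw [hget q (by omega)] at hqu
    have hx := upos u A B C hA hB hC _ hpu
    have hy := upos u A B C hA hB hC _ hqu
    set x : ℕ := (i + p) % n' with hxdef
    set y : ℕ := (i + q) % n' with hydef
    have hxlt : x < n' := Nat.mod_lt _ hn'pos
    have hrel : y = (x + (q - p)) % n' := by
      rw [hydef, hxdef, Nat.mod_add_mod]
      congr 1
      omega
    have hqp : q - p ≤ 4 := by omega
    have hqp1 : 1 ≤ q - p := by omega
    by_cases hcase : x + (q - p) < n'
    · rw [Nat.mod_eq_of_lt hcase] at hrel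
      omega
    · have h2n : x + (q - p) < 2 * n' := by omega
      have : (x + (q - p)) % n' = x + (q - p) - n' := by
        rw [Nat.mod_eq_sub_mod (by omega), Nat.mod_eq_of_lt (by omega)]
      rw [this] at hrel
      omega
  -- r is a rotation of A ++ B ++ C
  set F : List X := A ++ (B ++ C) with hFdef
  have hFlen : F.length = A.length + B.length + C.length := by simp [hFdef]; omega
  have hFpos : 8 ≤ F.length := by omega
  set r : List X := m.filter (P u) with hrdef
  have hl'split : l' = l'.take s ++ l'.drop s := (List.take_append_drop s l').symm
  have hrrot : ∃ k, r = F.rotate k := by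
    refine ⟨((l'.take s).filter (P u)).length, ?_⟩
    have hm2 : m = l'.drop s ++ l'.take s :=
      List.rotate_eq_drop_append_take (le_of_lt (by rw [← hn'def]; exact hs))
    have hFfil : F = (l'.take s).filter (P u) ++ (l'.drop s).filter (P u) := by
      have : F = l'.filter (P u) := by
        rw [hl'def, hFdef]
        rw [List.filter_append, List.filter_append, List.filter_append, List.filter_append]
        rw [filter_eq_self_of_not_mem hA, filter_eq_self_of_not_mem hB,
          filter_eq_self_of_not_mem hC]
        simp [P]
      rw [this]
      conv_lhs => rw [hl'split]
      rw [List.filter_append]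
    rw [hrdef, hm2, List.filter_append, hFfil, rotate_append]
  obtain ⟨kr, hkr⟩ := hrrot
  have hrlen : r.length = F.length := by rw [hkr, List.length_rotate]
  have hrno : ∀ i t, ¬ CyclicShortSubcycleAt r i t := by
    intro i t h
    rw [hkr] at h
    exact hno _ _ (C_rotate h)
  by_cases hcase : ∃ p, p ≤ t ∧ m[p]? = some u
  · -- one u inside the window
    obtain ⟨p, hpt, hpu⟩ := hcase
    have hp0 : p ≠ 0 := by
      rintro rfl
      exact hgap 0 t ht1 ht4 hpu (hm0 ▸ hpu)
    have hptne : p ≠ t := by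
      rintro rfl
      exact hgap 0 p (by omega) (by omega) (hm0.symm ▸ hpu) hpu
    have hplt : p < t := lt_of_le_of_ne hpt hptne
    have ht2 : 2 ≤ t := by omega
    have honly : ∀ j, j ≤ t → j ≠ p → m[j]? ≠ some u := by
      intro j hj hne hju
      rcases lt_or_gt_of_ne hne with h | h
      · exact hgap j p h (by omega) hju hpu
      · exact hgap p j h (by omega) hpu hju
    have hpe : p + (t - p) = t := by omega
    have heq2 := aux2 u m p (t - p) hpu (by rw [hpe]; exact honly)
    rw [hpe] at heq2
    have hru : ∀ j, j < t → r[j]? = if j < p then m[j]? else m[j + 1]? := heq2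
    have hCr : CyclicShortSubcycleAt r 0 (t - 1) := by
      have htr : t - 1 < r.length := by omega
      refine ⟨by omega, by omega, by omega, ?_, ?_⟩
      · rw [Nat.zero_mod, Nat.zero_add, Nat.mod_eq_of_lt htr]
        rw [hru 0 (by omega), hru (t-1) (by omega), if_pos (by omega), if_neg (by omega)]
        have : t - 1 + 1 = t := by omega
        rw [this]
        exact hm0
      · intro p' q' hpq' hq't
        rw [Nat.zero_add, Nat.zero_add, Nat.mod_eq_of_lt (by omega),
          Nat.mod_eq_of_lt (by omega)]
        rw [hru p' (by omega), hru q' (by omega)]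
        by_cases h1 : p' < p
        · by_cases h2 : q' < p
          · rw [if_pos h1, if_pos h2]
            exact hmdist p' q' hpq' (by omega)
          · rw [if_pos h1, if_neg h2]
            exact hmdist p' (q' + 1) (by omega) (by omega)
        · rw [if_neg h1, if_neg (by omega)]
          exact hmdist (p' + 1) (q' + 1) (by omega) (by omega)
    exact hrno 0 (t - 1) hCr
  · -- no u in the window
    push_neg at hcase
    have hagree : ∀ j, j ≤ t → r[j]? = m[j]? :=
      fun j hj => aux1 u m (t + 1) (fun j' hj' => hcase j' (by omega)) j (by omega)
    have hCr : CyclicShortSubcycleAt r 0 t := by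
      refine ⟨ht1, ht4, by omega, ?_, ?_⟩
      · rw [Nat.zero_mod, Nat.zero_add, Nat.mod_eq_of_lt (by omega)]
        rw [hagree 0 (by omega), hagree t le_rfl]
        exact hm0
      · intro p q hpq hqt
        rw [Nat.zero_add, Nat.zero_add, Nat.mod_eq_of_lt (by omega),
          Nat.mod_eq_of_lt (by omega)]
        rw [hagree p (by omega), hagree q (by omega)]
        exact hmdist p q hpq hqt
    exact hrno 0 t hCr


section Walks
variable {V : Type} {G : SimpleGraph V}

lemma exists_split (S : Set (Sym2 V)) {x y : V} (p : G.Walk x y)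
    (h : ∃ e ∈ p.edges, e ∈ S) :
    ∃ (x₁ x₂ : V) (hadj : G.Adj x₁ x₂) (q : G.Walk x x₁) (r : G.Walk x₂ y),
      p = q.append (Walk.cons hadj r) ∧ (∀ e ∈ q.edges, e ∉ S) ∧ s(x₁, x₂) ∈ S := by
  induction p with
  | nil => simp at h
  | @cons v w y' hadj p ih =>
      by_cases hc : s(v, w) ∈ S
      · exact ⟨v, w, hadj, Walk.nil, p, by simp, by simp, hc⟩
      · have h' : ∃ e ∈ p.edges, e ∈ S := by
          obtain ⟨e, he, heS⟩ := h
          rw [Walk.edges_cons] at he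
          rcases List.mem_cons.1 he with rfl | h''
          · exact absurd heS hc
          · exact ⟨e, h'', heS⟩
        obtain ⟨x₁, x₂, hadj', q, r, hpeq, hqS, hxS⟩ := ih h'
        refine ⟨x₁, x₂, hadj', Walk.cons hadj q, r, ?_, ?_, hxS⟩
        · rw [Walk.cons_append, hpeq]
        · intro e he
          rw [Walk.edges_cons] at he
          rcases List.mem_cons.1 he with rfl | h''
          · exact hc
          · exact hqS e h''

/-- Map a walk avoiding `cut` into the pegged graph `G'` via `Sum.inl`. -/
def mapDelWalk (cut : Set (Sym2 V)) {G' : SimpleGraph (V ⊕ Unit)}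
    (hhom : ∀ v w : V, (G.deleteEdges cut).Adj v w → G'.Adj (Sum.inl v) (Sum.inl w))
    {x y : V} (p : G.Walk x y) (hcf : ∀ e ∈ p.edges, e ∉ cut) :
    G'.Walk (Sum.inl x) (Sum.inl y) :=
  Walk.map ⟨Sum.inl, fun h => hhom _ _ h⟩ (p.toDeleteEdges cut hcf)

lemma support_mapDelWalk (cut : Set (Sym2 V)) {G' : SimpleGraph (V ⊕ Unit)}
    (hhom : ∀ v w : V, (G.deleteEdges cut).Adj v w → G'.Adj (Sum.inl v) (Sum.inl w))
    {x y : V} (p : G.Walk x y) (hcf : ∀ e ∈ p.edges, e ∉ cut) :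
    (mapDelWalk cut hhom p hcf).support = p.support.map Sum.inl := by
  rw [mapDelWalk, Walk.support_map, Walk.support_transfer]; rfl

lemma edges_mapDelWalk (cut : Set (Sym2 V)) {G' : SimpleGraph (V ⊕ Unit)}
    (hhom : ∀ v w : V, (G.deleteEdges cut).Adj v w → G'.Adj (Sum.inl v) (Sum.inl w))
    {x y : V} (p : G.Walk x y) (hcf : ∀ e ∈ p.edges, e ∉ cut) :
    (mapDelWalk cut hhom p hcf).edges = p.edges.map (Sym2.map Sum.inl) := by
  rw [mapDelWalk, Walk.edges_map, Walk.edges_transfer]; rfl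

lemma reachable_of_mem_support [DecidableEq V] {s t v : V} (p : G.Walk s t)
    (hv : v ∈ p.support) : G.Reachable s v :=
  ⟨p.takeUntil v hv⟩

lemma reachable_end_of_mem_support [DecidableEq V] {s t v : V} (p : G.Walk s t)
    (hv : v ∈ p.support) : G.Reachable t v :=
  reachable_of_mem_support p.reverse (by rwa [Walk.support_reverse, List.mem_reverse])

lemma three_le_length {α : Type*} [DecidableEq α] {l : List α} {e₁ e₂ e₃ : α}
    (h₁ : e₁ ∈ l) (h₂ : e₂ ∈ l) (h₃ : e₃ ∈ l)
    (h12 : e₁ ≠ e₂) (h13 : e₁ ≠ e₃) (h23 : e₂ ≠ e₃) : 3 ≤ l.length := by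
  have hsub : ({e₁, e₂, e₃} : Finset α) ⊆ l.toFinset := by
    intro x hx
    simp only [Finset.mem_insert, Finset.mem_singleton] at hx
    rcases hx with rfl | rfl | rfl <;> simpa using ‹_ ∈ l›
  have h3 : ({e₁, e₂, e₃} : Finset α).card = 3 := by
    rw [Finset.card_insert_of_notMem (by simp [h12, h13]),
      Finset.card_insert_of_notMem (by simp [h23]), Finset.card_singleton]
  calc 3 = ({e₁, e₂, e₃} : Finset α).card := h3.symm
    _ ≤ l.toFinset.card := Finset.card_le_card hsub
    _ ≤ l.length := List.toFinset_card_le l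

end Walks


lemma map_ne_ue {V : Type} (f : Sym2 V) (v : V) :
    Sym2.map Sum.inl f ≠ s(Sum.inl v, (Sum.inr () : V ⊕ Unit)) ∧
    Sym2.map Sum.inl f ≠ s((Sum.inr () : V ⊕ Unit), Sum.inl v) := by
  induction f using Sym2.ind with
  | _ p q => constructor <;> simp [Sym2.eq_iff]

lemma perm_helper {V : Type} (a b c d x₁ x₂ x₃ x₄ : V)
    (hab' : a ≠ b) (hac : a ≠ c) (had' : a ≠ d) (hbc' : b ≠ c) (hbd : b ≠ d) (hcd' : c ≠ d)
    (hc : (s(x₁, x₂) = s(a, b) ∧ s(x₃, x₄) = s(c, d)) ∨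
      (s(x₁, x₂) = s(c, d) ∧ s(x₃, x₄) = s(a, b))) :
    (∀ v : V, (v = x₁ ∨ v = x₂ ∨ v = x₃ ∨ v = x₄) ↔
        (v = a ∨ v = b ∨ v = c ∨ v = d)) ∧
      (x₁ ≠ x₃ ∧ x₁ ≠ x₄ ∧ x₂ ≠ x₃ ∧ x₂ ≠ x₄) := by
  rcases hc with ⟨h1, h2⟩ | ⟨h1, h2⟩ <;>
    rcases Sym2.eq_iff.1 h1 with ⟨rfl, rfl⟩ | ⟨rfl, rfl⟩ <;>
    rcases Sym2.eq_iff.1 h2 with ⟨rfl, rfl⟩ | ⟨rfl, rfl⟩ <;>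
    exact ⟨fun v => by tauto, by tauto⟩

/-- pegging an independent 2-edge-cut `{ab, cd}` of a connected
4-regular graph (deleting `ab` and `cd`, adding a new vertex `u = inr ()` and the
edges `ua, ub, uc, ud`) preserves the existence of a 4-locally self-avoiding
Eulerian circuit.  The edge-cut condition says deleting the two edges separates
`G` into exactly two components, one containing `a` and `d`, the other `b` and `c`. -/
theorem pegging_preserves_LSA4 {V : Type} [Fintype V] [DecidableEq V]
    (G : SimpleGraph V) [DecidableRel G.Adj]
    (hconn : G.Connected) (hreg : ∀ v : V, G.degree v = 4)
    (a b c d : V)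
    (hab' : a ≠ b) (hac : a ≠ c) (had' : a ≠ d) (hbc' : b ≠ c) (hbd : b ≠ d) (hcd' : c ≠ d)
    (hab : G.Adj a b) (hcd : G.Adj c d)
    (hsep : ¬ (G.deleteEdges {s(a, b), s(c, d)}).Reachable a b)
    (hside1 : (G.deleteEdges {s(a, b), s(c, d)}).Reachable a d)
    (hside2 : (G.deleteEdges {s(a, b), s(c, d)}).Reachable b c)
    (hall : ∀ v : V, (G.deleteEdges {s(a, b), s(c, d)}).Reachable a v ∨
      (G.deleteEdges {s(a, b), s(c, d)}).Reachable b v)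
    (G' : SimpleGraph (V ⊕ Unit))
    (hG1 : ∀ v w : V, G'.Adj (Sum.inl v) (Sum.inl w) ↔
      (G.Adj v w ∧ s(v, w) ≠ s(a, b) ∧ s(v, w) ≠ s(c, d)))
    (hG2 : ∀ v : V, G'.Adj (Sum.inl v) (Sum.inr ()) ↔ (v = a ∨ v = b ∨ v = c ∨ v = d))
    (hG : HasLSA4EulerianCircuit G) :
    HasLSA4EulerianCircuit G' := by
  classical
  obtain ⟨z, W, ⟨hTrail, hEdges⟩, hLSA⟩ := hG
  set u : V ⊕ Unit := Sum.inr () with hudef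
  set cut : Set (Sym2 V) := {s(a, b), s(c, d)} with hcutdef
  have hcutmem : ∀ e, e ∈ cut ↔ e = s(a, b) ∨ e = s(c, d) := by
    intro e; simp [hcutdef]
  have habcd : s(a, b) ≠ s(c, d) := by
    intro h
    rcases Sym2.eq_iff.1 h with ⟨rfl, rfl⟩ | ⟨rfl, rfl⟩
    · exact hac rfl
    · exact had' rfl
  have habW : s(a, b) ∈ W.edges := (hEdges _).1 (G.mem_edgeSet.2 hab)
  have hcdW : s(c, d) ∈ W.edges := (hEdges _).1 (G.mem_edgeSet.2 hcd)
  -- first split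
  obtain ⟨x₁, x₂, h₁, R₁, rest, hWeq, hR₁cf, he₁⟩ :=
    exists_split cut W ⟨s(a, b), habW, (hcutmem _).2 (Or.inl rfl)⟩
  have hWedges0 : W.edges = R₁.edges ++ s(x₁, x₂) :: rest.edges := by
    rw [hWeq, Walk.edges_append, Walk.edges_cons]
  have hother : ∃ eo, (eo = s(a, b) ∨ eo = s(c, d)) ∧ eo ≠ s(x₁, x₂) ∧ eo ∈ rest.edges := by
    rcases (hcutmem _).1 he₁ with h | h
    · refine ⟨s(c, d), Or.inr rfl, by rw [h]; exact habcd.symm, ?_⟩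
      have hin := hcdW
      rw [hWedges0] at hin
      rcases List.mem_append.1 hin with h' | h'
      · exact absurd ((hcutmem _).2 (Or.inr rfl)) (hR₁cf _ h')
      · rcases List.mem_cons.1 h' with h'' | h''
        · exact absurd (h'' ▸ h) habcd.symm
        · exact h''
    · refine ⟨s(a, b), Or.inl rfl, by rw [h]; exact habcd, ?_⟩
      have hin := habW
      rw [hWedges0] at hin
      rcases List.mem_append.1 hin with h' | h'
      · exact absurd ((hcutmem _).2 (Or.inl rfl)) (hR₁cf _ h')
      · rcases List.mem_cons.1 h' with h'' | h''
        · exact absurd (h'' ▸ h) habcd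
        · exact h''
  obtain ⟨eo, heo_cut, heo_ne, heo_rest⟩ := hother
  obtain ⟨x₃, x₄, h₂, M, R₂, hresteq, hMeo, he₃₄⟩ :=
    exists_split {eo} rest ⟨eo, heo_rest, rfl⟩
  have he₂ : s(x₃, x₄) = eo := he₃₄
  have hrestedges : rest.edges = M.edges ++ s(x₃, x₄) :: R₂.edges := by
    rw [hresteq, Walk.edges_append, Walk.edges_cons]
  have hWedges : W.edges = R₁.edges ++ s(x₁, x₂) :: (M.edges ++ s(x₃, x₄) :: R₂.edges) := by
    rw [hWedges0, hrestedges]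
  have hnodup := hTrail.edges_nodup
  rw [hWedges] at hnodup
  -- destructure nodup
  rw [List.nodup_append'] at hnodup
  obtain ⟨hndR₁, hnd1, hdisjR₁⟩ := hnodup
  rw [List.nodup_cons] at hnd1
  obtain ⟨he₁nin, hnd2⟩ := hnd1
  rw [List.nodup_append'] at hnd2
  obtain ⟨hndM, hnd3, hdisjM⟩ := hnd2
  rw [List.nodup_cons] at hnd3
  obtain ⟨he₂ninR₂, hndR₂⟩ := hnd3
  have he₁ninM : s(x₁, x₂) ∉ M.edges := fun h => he₁nin (List.mem_append.2 (Or.inl h))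
  have he₁ninR₂ : s(x₁, x₂) ∉ R₂.edges :=
    fun h => he₁nin (List.mem_append.2 (Or.inr (List.mem_cons.2 (Or.inr h))))
  -- case structure of the two cut edges
  have hcases : (s(x₁, x₂) = s(a, b) ∧ s(x₃, x₄) = s(c, d)) ∨
      (s(x₁, x₂) = s(c, d) ∧ s(x₃, x₄) = s(a, b)) := by
    rcases (hcutmem _).1 he₁ with h | h <;> rcases heo_cut with h' | h'
    · exact absurd (h'.trans h.symm) heo_ne
    · exact Or.inl ⟨h, he₂.trans h'⟩
    · exact Or.inr ⟨h, he₂.trans h'⟩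
    · exact absurd (h'.trans h.symm) heo_ne
  have hcutiff : ∀ e, e ∈ cut ↔ (e = s(x₁, x₂) ∨ e = s(x₃, x₄)) := by
    intro e
    rcases hcases with ⟨hA, hB⟩ | ⟨hA, hB⟩ <;> rw [hcutmem e, hA, hB] <;> tauto
  have hMcf : ∀ e ∈ M.edges, e ∉ cut := by
    intro e he hc
    rcases (hcutiff e).1 hc with rfl | rfl
    · exact he₁ninM he
    · exact hMeo _ he (Set.mem_singleton_iff.2 he₂)
  have hR₂cf : ∀ e ∈ R₂.edges, e ∉ cut := by
    intro e he hc
    rcases (hcutiff e).1 hc with rfl | rfl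
    · exact he₁ninR₂ he
    · exact he₂ninR₂ he
  -- reachability infrastructure
  have hnRAb : ¬ (G.deleteEdges cut).Reachable a b := hsep
  have hnRAc : ¬ (G.deleteEdges cut).Reachable a c := fun h => hsep (h.trans hside2.symm)
  have hnRBa : ¬ (G.deleteEdges cut).Reachable b a := fun h => hsep h.symm
  have hnRBd : ¬ (G.deleteEdges cut).Reachable b d := fun h => hsep (hside1.trans h.symm)
  have hpair : ∀ v w : V, (s(v, w) = s(a, b) ∨ s(v, w) = s(c, d)) →
      ¬((G.deleteEdges cut).Reachable a v ∧ (G.deleteEdges cut).Reachable a w) ∧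
      ¬((G.deleteEdges cut).Reachable b v ∧ (G.deleteEdges cut).Reachable b w) := by
    rintro v w (h | h) <;> rcases Sym2.eq_iff.1 h with ⟨rfl, rfl⟩ | ⟨rfl, rfl⟩
    · exact ⟨fun h' => hnRAb h'.2, fun h' => hnRBa h'.1⟩
    · exact ⟨fun h' => hnRAb h'.1, fun h' => hnRBa h'.2⟩
    · exact ⟨fun h' => hnRAc h'.1, fun h' => hnRBd h'.2⟩
    · exact ⟨fun h' => hnRAc h'.2, fun h' => hnRBd h'.1⟩
  have hstr12 := hpair x₁ x₂ (by rcases hcases with ⟨h, _⟩ | ⟨h, _⟩; exacts [Or.inl h, Or.inr h])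
  have hstr34 := hpair x₃ x₄ (by rcases hcases with ⟨_, h⟩ | ⟨_, h⟩; exacts [Or.inr h, Or.inl h])
  have hsupReach : ∀ {s t : V} (p : G.Walk s t), (∀ e ∈ p.edges, e ∉ cut) → ∀ v : V,
      v ∈ p.support → (G.deleteEdges cut).Reachable s v := by
    intro s t p hcf v hv
    exact reachable_of_mem_support (p.toDeleteEdges cut hcf) (by rwa [Walk.support_transfer])
  have hsupReach' : ∀ {s t : V} (p : G.Walk s t), (∀ e ∈ p.edges, e ∉ cut) → ∀ v : V,
      v ∈ p.support → (G.deleteEdges cut).Reachable t v := by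
    intro s t p hcf v hv
    exact reachable_end_of_mem_support (p.toDeleteEdges cut hcf) (by rwa [Walk.support_transfer])
  -- three extra neighbors
  have hthree : ∀ v w : V, G.Adj v w → ∃ y₁ y₂ y₃ : V, y₁ ≠ y₂ ∧ y₁ ≠ y₃ ∧ y₂ ≠ y₃ ∧
      (G.Adj v y₁ ∧ y₁ ≠ w) ∧ (G.Adj v y₂ ∧ y₂ ≠ w) ∧ (G.Adj v y₃ ∧ y₃ ≠ w) := by
    intro v w hvw
    have hmem : w ∈ G.neighborFinset v := (G.mem_neighborFinset v w).2 hvw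
    have hcard : ((G.neighborFinset v).erase w).card = 3 := by
      rw [Finset.card_erase_of_mem hmem]
      have h4 : (G.neighborFinset v).card = 4 := hreg v
      omega
    obtain ⟨y₁, y₂, y₃, h12, h13, h23, hset⟩ := Finset.card_eq_three.1 hcard
    have hmem' : ∀ y ∈ ({y₁, y₂, y₃} : Finset V), G.Adj v y ∧ y ≠ w := by
      intro y hy
      rw [← hset] at hy
      exact ⟨(G.mem_neighborFinset v y).1 (Finset.mem_of_mem_erase hy),
        Finset.ne_of_mem_erase hy⟩
    exact ⟨y₁, y₂, y₃, h12, h13, h23, hmem' y₁ (by simp), hmem' y₂ (by simp),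
      hmem' y₃ (by simp)⟩
  have hdistrib : ∀ e ∈ W.edges, e ∉ cut → (e ∈ R₁.edges ∨ e ∈ M.edges ∨ e ∈ R₂.edges) := by
    intro e he hc
    rw [hWedges] at he
    have hne1 : e ≠ s(x₁, x₂) := fun h => hc ((hcutiff e).2 (Or.inl h))
    have hne2 : e ≠ s(x₃, x₄) := fun h => hc ((hcutiff e).2 (Or.inr h))
    simp only [List.mem_append, List.mem_cons] at he
    rcases he with h | h
    · exact Or.inl h
    · rcases h with h | h
      · exact absurd h hne1
      · rcases h with h | h
        · exact Or.inr (Or.inl h)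
        · rcases h with h | h
          · exact absurd h hne2
          · exact Or.inr (Or.inr h)
  have hnc_a : ∀ y, G.Adj a y → y ≠ b → s(a, y) ∉ cut := by
    intro y hy hyb hc
    rcases (hcutmem _).1 hc with h | h <;> rcases Sym2.eq_iff.1 h with ⟨h1, h2⟩ | ⟨h1, h2⟩
    · exact hyb h2
    · exact hab' h1
    · exact hac h1
    · exact had' h1
  have hnc_b : ∀ y, G.Adj b y → y ≠ a → s(b, y) ∉ cut := by
    intro y hy hya hc
    rcases (hcutmem _).1 hc with h | h <;> rcases Sym2.eq_iff.1 h with ⟨h1, h2⟩ | ⟨h1, h2⟩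
    · exact hab' h1.symm
    · exact hya h2
    · exact hbc' h1
    · exact hbd h1
  have hsym_ne : ∀ (v y y' : V), y ≠ y' → s(v, y) ≠ s(v, y') := by
    intro v y y' hne h
    rcases Sym2.eq_iff.1 h with ⟨_, h2⟩ | ⟨h1, h2⟩
    · exact hne h2
    · exact hne (h2.trans h1)
  -- the two length bounds
  have hbounds : 3 ≤ M.length ∧ 3 ≤ R₁.length + R₂.length := by
    obtain ⟨p₁, p₂, p₃, hp12, hp13, hp23, ⟨hap₁, hpb₁⟩, ⟨hap₂, hpb₂⟩, ⟨hap₃, hpb₃⟩⟩ :=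
      hthree a b hab
    obtain ⟨q₁, q₂, q₃, hq12, hq13, hq23, ⟨hbq₁, hqa₁⟩, ⟨hbq₂, hqa₂⟩, ⟨hbq₃, hqa₃⟩⟩ :=
      hthree b a hab.symm
    have hpW : ∀ y, G.Adj a y → s(a, y) ∈ W.edges := fun y hy => (hEdges _).1 (G.mem_edgeSet.2 hy)
    have hqW : ∀ y, G.Adj b y → s(b, y) ∈ W.edges := fun y hy => (hEdges _).1 (G.mem_edgeSet.2 hy)
    rcases hall x₂ with hx₂A | hx₂B
    · -- x₂ on the a-side
      have hMside : ∀ v ∈ M.support, (G.deleteEdges cut).Reachable a v :=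
        fun v hv => hx₂A.trans (hsupReach M hMcf v hv)
      have hx₁B : (G.deleteEdges cut).Reachable b x₁ := by
        rcases hall x₁ with h | h
        · exact absurd ⟨h, hx₂A⟩ hstr12.1
        · exact h
      have hR₁side : ∀ v ∈ R₁.support, (G.deleteEdges cut).Reachable b v :=
        fun v hv => hx₁B.trans (hsupReach' R₁ hR₁cf v hv)
      have hx₃A : (G.deleteEdges cut).Reachable a x₃ := hMside x₃ M.end_mem_support
      have hx₄B : (G.deleteEdges cut).Reachable b x₄ := by
        rcases hall x₄ with h | h
        · exact absurd ⟨hx₃A, h⟩ hstr34.1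
        · exact h
      have hR₂side : ∀ v ∈ R₂.support, (G.deleteEdges cut).Reachable b v :=
        fun v hv => hx₄B.trans (hsupReach R₂ hR₂cf v hv)
      have haM : ∀ y, G.Adj a y → y ≠ b → s(a, y) ∈ M.edges := by
        intro y hy hyb
        rcases hdistrib _ (hpW y hy) (hnc_a y hy hyb) with h | h | h
        · exact absurd (hR₁side a (Walk.fst_mem_support_of_mem_edges R₁ h)) hnRBa
        · exact h
        · exact absurd (hR₂side a (Walk.fst_mem_support_of_mem_edges R₂ h)) hnRBa
      have hbR : ∀ y, G.Adj b y → y ≠ a → s(b, y) ∈ R₁.edges ++ R₂.edges := by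
        intro y hy hya
        rcases hdistrib _ (hqW y hy) (hnc_b y hy hya) with h | h | h
        · exact List.mem_append.2 (Or.inl h)
        · exact absurd (hMside b (Walk.fst_mem_support_of_mem_edges M h)) hnRAb
        · exact List.mem_append.2 (Or.inr h)
      constructor
      · rw [← Walk.length_edges]
        exact three_le_length (haM p₁ hap₁ hpb₁) (haM p₂ hap₂ hpb₂) (haM p₃ hap₃ hpb₃)
          (hsym_ne a p₁ p₂ hp12) (hsym_ne a p₁ p₃ hp13) (hsym_ne a p₂ p₃ hp23)
      · have h3 := three_le_length (hbR q₁ hbq₁ hqa₁) (hbR q₂ hbq₂ hqa₂) (hbR q₃ hbq₃ hqa₃)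
          (hsym_ne b q₁ q₂ hq12) (hsym_ne b q₁ q₃ hq13) (hsym_ne b q₂ q₃ hq23)
        rwa [List.length_append, Walk.length_edges, Walk.length_edges] at h3
    · -- x₂ on the b-side
      have hMside : ∀ v ∈ M.support, (G.deleteEdges cut).Reachable b v :=
        fun v hv => hx₂B.trans (hsupReach M hMcf v hv)
      have hx₁A : (G.deleteEdges cut).Reachable a x₁ := by
        rcases hall x₁ with h | h
        · exact h
        · exact absurd ⟨h, hx₂B⟩ hstr12.2
      have hR₁side : ∀ v ∈ R₁.support, (G.deleteEdges cut).Reachable a v :=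
        fun v hv => hx₁A.trans (hsupReach' R₁ hR₁cf v hv)
      have hx₃B : (G.deleteEdges cut).Reachable b x₃ := hMside x₃ M.end_mem_support
      have hx₄A : (G.deleteEdges cut).Reachable a x₄ := by
        rcases hall x₄ with h | h
        · exact h
        · exact absurd ⟨hx₃B, h⟩ hstr34.2
      have hR₂side : ∀ v ∈ R₂.support, (G.deleteEdges cut).Reachable a v :=
        fun v hv => hx₄A.trans (hsupReach R₂ hR₂cf v hv)
      have hbM : ∀ y, G.Adj b y → y ≠ a → s(b, y) ∈ M.edges := by
        intro y hy hya
        rcases hdistrib _ (hqW y hy) (hnc_b y hy hya) with h | h | h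
        · exact absurd (hR₁side b (Walk.fst_mem_support_of_mem_edges R₁ h)) hnRAb
        · exact h
        · exact absurd (hR₂side b (Walk.fst_mem_support_of_mem_edges R₂ h)) hnRAb
      have haR : ∀ y, G.Adj a y → y ≠ b → s(a, y) ∈ R₁.edges ++ R₂.edges := by
        intro y hy hyb
        rcases hdistrib _ (hpW y hy) (hnc_a y hy hyb) with h | h | h
        · exact List.mem_append.2 (Or.inl h)
        · exact absurd (hMside a (Walk.fst_mem_support_of_mem_edges M h)) hnRBa
        · exact List.mem_append.2 (Or.inr h)
      constructor
      · rw [← Walk.length_edges]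
        exact three_le_length (hbM q₁ hbq₁ hqa₁) (hbM q₂ hbq₂ hqa₂) (hbM q₃ hbq₃ hqa₃)
          (hsym_ne b q₁ q₂ hq12) (hsym_ne b q₁ q₃ hq13) (hsym_ne b q₂ q₃ hq23)
      · have h3 := three_le_length (haR p₁ hap₁ hpb₁) (haR p₂ hap₂ hpb₂) (haR p₃ hap₃ hpb₃)
          (hsym_ne a p₁ p₂ hp12) (hsym_ne a p₁ p₃ hp13) (hsym_ne a p₂ p₃ hp23)
        rwa [List.length_append, Walk.length_edges, Walk.length_edges] at h3
  -- permutation facts about x₁,x₂,x₃,x₄ vs a,b,c,d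
  have hperm := perm_helper a b c d x₁ x₂ x₃ x₄ hab' hac had' hbc' hbd hcd' hcases
  have hx12 : x₁ ≠ x₂ := h₁.ne
  have hx34 : x₃ ≠ x₄ := h₂.ne
  -- homomorphism into G'
  have hhom : ∀ v w : V, (G.deleteEdges cut).Adj v w → G'.Adj (Sum.inl v) (Sum.inl w) := by
    intro v w hvw
    rw [SimpleGraph.deleteEdges_adj] at hvw
    refine (hG1 v w).2 ⟨hvw.1, ?_, ?_⟩
    · exact fun h => hvw.2 ((hcutmem _).2 (Or.inl h))
    · exact fun h => hvw.2 ((hcutmem _).2 (Or.inr h))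
  have hadj_u : ∀ v : V, (v = x₁ ∨ v = x₂ ∨ v = x₃ ∨ v = x₄) → G'.Adj (Sum.inl v) u :=
    fun v hv => (hG2 v).2 ((hperm.1 v).1 hv)
  set W' : G'.Walk (Sum.inl z) (Sum.inl z) :=
    (mapDelWalk cut hhom R₁ hR₁cf).append
      (Walk.cons (hadj_u x₁ (Or.inl rfl))
        (Walk.cons (hadj_u x₂ (Or.inr (Or.inl rfl))).symm
          ((mapDelWalk cut hhom M hMcf).append
            (Walk.cons (hadj_u x₃ (Or.inr (Or.inr (Or.inl rfl))))
              (Walk.cons (hadj_u x₄ (Or.inr (Or.inr (Or.inr rfl)))).symm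
                (mapDelWalk cut hhom R₂ hR₂cf)))))) with hW'def
  have hW'edges : W'.edges =
      (R₁.edges.map (Sym2.map Sum.inl)) ++ (s(Sum.inl x₁, u) :: s(u, Sum.inl x₂) ::
        ((M.edges.map (Sym2.map Sum.inl)) ++ (s(Sum.inl x₃, u) :: s(u, Sum.inl x₄) ::
          (R₂.edges.map (Sym2.map Sum.inl))))) := by
    rw [hW'def, Walk.edges_append, Walk.edges_cons, Walk.edges_cons, Walk.edges_append,
      Walk.edges_cons, Walk.edges_cons, edges_mapDelWalk, edges_mapDelWalk, edges_mapDelWalk]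
  have hmf_inj : Function.Injective (Sym2.map (Sum.inl : V → V ⊕ Unit)) :=
    Sym2.map.injective Sum.inl_injective
  refine ⟨Sum.inl z, W', ⟨?_, ?_⟩, ?_⟩
  · -- trail
    have hR₁M : ∀ e ∈ R₁.edges, e ∉ M.edges := fun e he hm =>
      hdisjR₁ he (List.mem_cons.2 (Or.inr (List.mem_append.2 (Or.inl hm))))
    have hR₁R₂ : ∀ e ∈ R₁.edges, e ∉ R₂.edges := fun e he hm =>
      hdisjR₁ he (List.mem_cons.2 (Or.inr (List.mem_append.2
        (Or.inr (List.mem_cons.2 (Or.inr hm))))))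
    have hMR₂ : ∀ e ∈ M.edges, e ∉ R₂.edges := fun e he hm =>
      hdisjM he (List.mem_cons.2 (Or.inr hm))
    have hmapne1 : ∀ (L : List (Sym2 V)) (v : V),
        s(Sum.inl v, u) ∉ L.map (Sym2.map Sum.inl) := by
      intro L v h
      obtain ⟨g, _, hg⟩ := List.mem_map.1 h
      exact (map_ne_ue g v).1 hg
    have hmapne2 : ∀ (L : List (Sym2 V)) (v : V),
        s(u, Sum.inl v) ∉ L.map (Sym2.map Sum.inl) := by
      intro L v h
      obtain ⟨g, _, hg⟩ := List.mem_map.1 h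
      exact (map_ne_ue g v).2 hg
    have hmapdisj : ∀ (L L' : List (Sym2 V)), (∀ e ∈ L, e ∉ L') →
        (L.map (Sym2.map (Sum.inl : V → V ⊕ Unit))).Disjoint
          (L'.map (Sym2.map Sum.inl)) := by
      intro L L' hLL x hx hx'
      obtain ⟨g, hg, rfl⟩ := List.mem_map.1 hx
      obtain ⟨g', hg', heq⟩ := List.mem_map.1 hx'
      exact hLL g hg (hmf_inj heq ▸ hg')
    have hne_uu : ∀ (v w : V), v ≠ w → s(Sum.inl v, u) ≠ s(u, Sum.inl w) := by
      intro v w hne h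
      rw [hudef] at h
      rcases Sym2.eq_iff.1 h with ⟨h1, _⟩ | ⟨h1, _⟩
      · exact absurd h1 (by simp)
      · exact hne (Sum.inl_injective h1)
    have hne_ll : ∀ (v w : V), v ≠ w → s(Sum.inl v, u) ≠ s(Sum.inl w, u) := by
      intro v w hne h
      rw [hudef] at h
      rcases Sym2.eq_iff.1 h with ⟨h1, _⟩ | ⟨h1, _⟩
      · exact hne (Sum.inl_injective h1)
      · exact absurd h1 (by simp)
    have hne_rr : ∀ (v w : V), v ≠ w → s(u, Sum.inl v) ≠ s(u, Sum.inl w) := by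
      intro v w hne h
      rw [hudef] at h
      rcases Sym2.eq_iff.1 h with ⟨_, h2⟩ | ⟨h1, _⟩
      · exact hne (Sum.inl_injective h2)
      · exact absurd h1 (by simp)
    rw [Walk.isTrail_def, hW'edges]
    refine List.Nodup.append (hndR₁.map hmf_inj) ?_ ?_
    · refine List.nodup_cons.2 ⟨?_, List.nodup_cons.2 ⟨?_, ?_⟩⟩
      · -- s(inl x₁, u) not in the rest
        intro h
        rcases List.mem_cons.1 h with h | h
        · exact hne_uu x₁ x₂ hx12 h
        · rcases List.mem_append.1 h with h | h
          · exact hmapne1 M.edges x₁ h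
          · rcases List.mem_cons.1 h with h | h
            · exact hne_ll x₁ x₃ hperm.2.1 h
            · rcases List.mem_cons.1 h with h | h
              · exact hne_uu x₁ x₄ hperm.2.2.1 h
              · exact hmapne1 R₂.edges x₁ h
      · -- s(u, inl x₂) not in the rest
        intro h
        rcases List.mem_append.1 h with h | h
        · exact hmapne2 M.edges x₂ h
        · rcases List.mem_cons.1 h with h | h
          · exact hne_uu x₃ x₂ (Ne.symm hperm.2.2.2.1) h.symm
          · rcases List.mem_cons.1 h with h | h
            · exact hne_rr x₂ x₄ hperm.2.2.2.2 h
            · exact hmapne2 R₂.edges x₂ h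
      · refine List.Nodup.append (hndM.map hmf_inj) ?_ ?_
        · refine List.nodup_cons.2 ⟨?_, List.nodup_cons.2 ⟨?_, hndR₂.map hmf_inj⟩⟩
          · intro h
            rcases List.mem_cons.1 h with h | h
            · exact hne_uu x₃ x₄ hx34 h
            · exact hmapne1 R₂.edges x₃ h
          · exact hmapne2 R₂.edges x₄
        · intro x hx hx'
          rcases List.mem_cons.1 hx' with h | h
          · exact hmapne1 M.edges x₃ (h ▸ hx)
          · rcases List.mem_cons.1 h with h | h
            · exact hmapne2 M.edges x₄ (h ▸ hx)
            · exact hmapdisj M.edges R₂.edges hMR₂ hx h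
    · -- disjointness of ER₁ with the rest
      intro x hx hx'
      rcases List.mem_cons.1 hx' with h | h
      · exact hmapne1 R₁.edges x₁ (h ▸ hx)
      · rcases List.mem_cons.1 h with h | h
        · exact hmapne2 R₁.edges x₂ (h ▸ hx)
        · rcases List.mem_append.1 h with h | h
          · exact hmapdisj R₁.edges M.edges hR₁M hx h
          · rcases List.mem_cons.1 h with h | h
            · exact hmapne1 R₁.edges x₃ (h ▸ hx)
            · rcases List.mem_cons.1 h with h | h
              · exact hmapne2 R₁.edges x₄ (h ▸ hx)
              · exact hmapdisj R₁.edges R₂.edges hR₁R₂ hx h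
  · -- Eulerian: edge set coverage
    have hmm : ∀ v : V, G'.Adj (Sum.inl v) u → s(Sum.inl v, u) ∈ W'.edges := by
      intro v hv
      have hv4 := (hperm.1 v).2 ((hG2 v).1 hv)
      rw [hW'edges]
      rcases hv4 with rfl | rfl | rfl | rfl
      · exact List.mem_append.2 (Or.inr (List.mem_cons.2 (Or.inl rfl)))
      · exact List.mem_append.2 (Or.inr (List.mem_cons.2 (Or.inr
          (List.mem_cons.2 (Or.inl Sym2.eq_swap)))))
      · exact List.mem_append.2 (Or.inr (List.mem_cons.2 (Or.inr (List.mem_cons.2 (Or.inr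
          (List.mem_append.2 (Or.inr (List.mem_cons.2 (Or.inl rfl)))))))))
      · exact List.mem_append.2 (Or.inr (List.mem_cons.2 (Or.inr (List.mem_cons.2 (Or.inr
          (List.mem_append.2 (Or.inr (List.mem_cons.2 (Or.inr
            (List.mem_cons.2 (Or.inl Sym2.eq_swap)))))))))))
    intro e
    induction e using Sym2.ind with
    | _ pp qq =>
      constructor
      · intro he
        rw [SimpleGraph.mem_edgeSet] at he
        cases pp with
        | inl v =>
          cases qq with
          | inl w =>
            obtain ⟨hGvw, hne1, hne2⟩ := (hG1 v w).1 he
            have hnc : s(v, w) ∉ cut := by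
              rw [hcutmem]
              rintro (h | h)
              · exact hne1 h
              · exact hne2 h
            have hW := (hEdges _).1 (G.mem_edgeSet.2 hGvw)
            have hmap : ∀ (L : List (Sym2 V)), s(v, w) ∈ L →
                s(Sum.inl v, Sum.inl w) ∈ L.map (Sym2.map (Sum.inl : V → V ⊕ Unit)) := by
              intro L h
              exact List.mem_map.2 ⟨s(v, w), h, by simp⟩
            rw [hW'edges]
            rcases hdistrib _ hW hnc with h | h | h
            · exact List.mem_append.2 (Or.inl (hmap _ h))
            · exact List.mem_append.2 (Or.inr (List.mem_cons.2 (Or.inr (List.mem_cons.2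
                (Or.inr (List.mem_append.2 (Or.inl (hmap _ h))))))))
            · exact List.mem_append.2 (Or.inr (List.mem_cons.2 (Or.inr (List.mem_cons.2
                (Or.inr (List.mem_append.2 (Or.inr (List.mem_cons.2 (Or.inr
                  (List.mem_cons.2 (Or.inr (hmap _ h))))))))))))
          | inr uu =>
            cases uu
            exact hmm v he
        | inr uu =>
          cases uu
          cases qq with
          | inl w =>
            rw [Sym2.eq_swap]
            exact hmm w he.symm
          | inr uu' =>
            cases uu'
            exact absurd rfl (G'.ne_of_adj he)
      · exact fun h => W'.edges_subset_edgeSet h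
  · -- LSA4
    show ¬ ∃ i t, CyclicShortSubcycleAt W'.support.dropLast i t
    rintro ⟨i, t, hsub⟩
    have hsupW' : W'.support = (R₁.support.map Sum.inl) ++ (u ::
        ((M.support.map Sum.inl) ++ (u :: (R₂.support.map Sum.inl)))) := by
      rw [hW'def]
      simp only [Walk.support_append, Walk.support_cons, support_mapDelWalk, List.tail_cons]
    have h2 : (R₂.support.map (Sum.inl : V → V ⊕ Unit)) ≠ [] := by
      simp [Walk.support_ne_nil]
    have hL'eq : W'.support.dropLast = (R₁.support.map Sum.inl) ++ ([u] ++
        ((M.support.map Sum.inl) ++ ([u] ++ (R₂.support.map Sum.inl).dropLast))) := by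
      rw [hsupW']
      rw [List.dropLast_append_of_ne_nil (by simp)]
      rw [List.dropLast_cons_of_ne_nil (by simp [h2])]
      rw [List.dropLast_append_of_ne_nil (by simp [h2])]
      rw [List.dropLast_cons_of_ne_nil h2]
      rfl
    have hsupW : W.support.dropLast = R₁.support ++ (M.support ++ R₂.support.dropLast) := by
      have hs : W.support = R₁.support ++ (M.support ++ R₂.support) := by
        rw [hWeq, hresteq]
        simp only [Walk.support_append, Walk.support_cons, List.tail_cons]
      rw [hs, List.dropLast_append_of_ne_nil (by simp [Walk.support_ne_nil]),
        List.dropLast_append_of_ne_nil (Walk.support_ne_nil _)]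
    have hnoF : ∀ i t, ¬ CyclicShortSubcycleAt ((R₁.support.map (Sum.inl : V → V ⊕ Unit)) ++
        ((M.support.map Sum.inl) ++ (R₂.support.map Sum.inl).dropLast)) i t := by
      intro i t hF
      have hmapeq : (R₁.support.map (Sum.inl : V → V ⊕ Unit)) ++
          ((M.support.map Sum.inl) ++ (R₂.support.map Sum.inl).dropLast) =
          (W.support.dropLast).map Sum.inl := by
        rw [hsupW]
        simp [List.map_append, List.map_dropLast]
      rw [hmapeq] at hF
      exact hLSA ⟨i, t, C_map Sum.inl_injective hF⟩
    have happly := noCyclic_insert u (R₁.support.map Sum.inl) (M.support.map Sum.inl)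
      ((R₂.support.map Sum.inl).dropLast)
      (by simp) (by simp)
      (fun hu => by
        have hnotin : u ∉ (R₂.support.map (Sum.inl : V → V ⊕ Unit)) := by simp
        exact hnotin ((List.dropLast_sublist _).subset hu))
      (by
        have hb := hbounds.1
        rw [List.length_map, Walk.length_support]
        omega)
      (by
        have hb := hbounds.2
        rw [List.length_map, List.length_dropLast, List.length_map,
          Walk.length_support, Walk.length_support]
        omega)
      hnoF i t
    rw [hL'eq] at hsub
    exact happly hsub


end Quartic
end

section
/- Let G be a simple graph whose vertex set is partitioned into two sets V_A and V_B and whose edge set is partitioned as E(G) = E_A ∪ E_B ∪ {xs, yt}, where every edge in E_A has both endpoints in V_A, every edge in E_B has both endpoints in V_B, x and y are distinct vertices in V_A, and s and t are distinct vertices in V_B. Suppose the subgraph of G with edge set E_A admits a 4-locally self-avoiding Eulerian trail P from x to y of length at least 3, and the subgraph with edge set E_B admits a 4-locally self-avoiding Eulerian trail Q from t to s of length at least 3. Then the closed walk obtained by concatenating P (from x to y), the edge yt, Q (from t to s), and the edge sx is a 4-locally self-avoiding Eulerian circuit of G. -/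
open SimpleGraph

namespace Quartic

variable {V : Type*}

lemma walk_support_subset {E : Set (Sym2 V)} {S : Set V}
    (hE : ∀ e ∈ E, ∀ v ∈ e, v ∈ S) :
    ∀ {u w : V} (p : (SimpleGraph.fromEdgeSet E).Walk u w), u ∈ S →
      ∀ v ∈ p.support, v ∈ S := by
  intro u w p
  induction p with
  | nil => intro hu v hv; simp at hv; subst hv; exact hu
  | @cons a b c h q ih =>
    intro hu v hv
    have hb : b ∈ S := by
      have hab : s(a, b) ∈ E := ((SimpleGraph.fromEdgeSet_adj E).mp h).1
      exact hE _ hab b (Sym2.mem_mk_right a b)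
    rcases List.mem_cons.mp hv with rfl | hv
    · exact hu
    · exact ih hb v hv

lemma no_cyclic_of_parts {A B : Set V} (hd : Disjoint A B)
    (lA lB : List V) (hA : ∀ v ∈ lA, v ∈ A) (hB : ∀ v ∈ lB, v ∈ B)
    (hlA : 4 ≤ lA.length) (hlB : 4 ≤ lB.length)
    (hnA : ¬ ∃ i t, ShortSubcycleAt lA i t)
    (hnB : ¬ ∃ i t, ShortSubcycleAt lB i t) :
    ¬ ∃ i t, CyclicShortSubcycleAt (lA ++ lB) i t := by
  rintro ⟨i, t, h1, h4, htN, heq, hdist⟩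
  set m := lA.length with hm
  set N := (lA ++ lB).length with hNdef
  have hN : N = m + lB.length := by simp [hNdef, hm]
  have hN8 : 8 ≤ N := by omega
  have hNpos : 0 < N := by omega
  set j := i % N with hj
  have hjN : j < N := Nat.mod_lt _ hNpos
  have hmod : ∀ p, (i + p) % N = (j + p) % N := by
    intro p; rw [hj, Nat.mod_add_mod]
  have heq' : (lA ++ lB)[j]? = (lA ++ lB)[(j + t) % N]? := by
    have := heq
    rwa [hmod t] at this
  have hdist' : ∀ p q, p < q → q < t →
      (lA ++ lB)[(j + p) % N]? ≠ (lA ++ lB)[(j + q) % N]? := by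
    intro p q hpq hqt
    have := hdist p q hpq hqt
    rwa [hmod p, hmod q] at this
  have hgetA : ∀ a, a < m → ∃ v ∈ A, (lA ++ lB)[a]? = some v := by
    intro a ha
    refine ⟨lA[a], hA _ (List.getElem_mem ha), ?_⟩
    rw [List.getElem?_append_left ha, List.getElem?_eq_getElem ha]
  have hgetB : ∀ a, m ≤ a → a < N → ∃ v ∈ B, (lA ++ lB)[a]? = some v := by
    intro a ha haN
    have h2 : a - m < lB.length := by omega
    refine ⟨lB[a - m], hB _ (List.getElem_mem h2), ?_⟩
    rw [List.getElem?_append_right ha, List.getElem?_eq_getElem h2]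
  have hAB : ∀ a b, a < m → m ≤ b → b < N →
      (lA ++ lB)[a]? ≠ (lA ++ lB)[b]? := by
    intro a b ha hb hbN h
    obtain ⟨v, hv, hv'⟩ := hgetA a ha
    obtain ⟨w, hw, hw'⟩ := hgetB b hb hbN
    rw [hv', hw'] at h
    exact hd.le_bot ⟨hv, (Option.some_injective _ h) ▸ hw⟩
  by_cases hwrap : j + t < N
  · by_cases hcross : j + t < m
    · apply hnA
      refine ⟨j, t, h1, h4, by omega, ?_, ?_⟩
      · have e1 : (lA ++ lB)[j]? = lA[j]? := List.getElem?_append_left (by omega)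
        have e2 : (lA ++ lB)[j + t]? = lA[j + t]? := List.getElem?_append_left hcross
        have := heq'
        rw [Nat.mod_eq_of_lt (by omega), e1, e2] at this
        exact this
      · intro p q hjp hpq hqt
        have h5 := hdist' (p - j) (q - j) (by omega) (by omega)
        rw [show j + (p - j) = p by omega, show j + (q - j) = q by omega,
          Nat.mod_eq_of_lt (by omega), Nat.mod_eq_of_lt (by omega),
          List.getElem?_append_left (show p < m by omega), List.getElem?_append_left (show q < m by omega)] at h5
        exact h5
    · by_cases hjm : j < m
      · have := heq'
        rw [Nat.mod_eq_of_lt (by omega)] at this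
        exact hAB j (j + t) hjm (by omega) hwrap this
      · apply hnB
        refine ⟨j - m, t, h1, h4, by omega, ?_, ?_⟩
        · have e1 : (lA ++ lB)[j]? = lB[j - m]? := List.getElem?_append_right (by omega)
          have e2 : (lA ++ lB)[j + t]? = lB[j + t - m]? := List.getElem?_append_right (by omega)
          have := heq'
          rw [Nat.mod_eq_of_lt (by omega), e1, e2, show j + t - m = j - m + t by omega] at this
          exact this
        · intro p q hjp hpq hqt
          have h5 := hdist' (p - (j - m)) (q - (j - m)) (by omega) (by omega)
          rw [show j + (p - (j - m)) = m + p by omega,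
            show j + (q - (j - m)) = m + q by omega,
            Nat.mod_eq_of_lt (by omega), Nat.mod_eq_of_lt (by omega),
            List.getElem?_append_right (show m ≤ m + p by omega),
            List.getElem?_append_right (show m ≤ m + q by omega),
            Nat.add_sub_cancel_left, Nat.add_sub_cancel_left] at h5
          exact h5
  · have hjm : m ≤ j := by omega
    have hmm : (j + t) % N = j + t - N := by
      rw [Nat.mod_eq_sub_mod (by omega)]
      exact Nat.mod_eq_of_lt (by omega)
    have := heq'.symm
    rw [hmm] at this
    exact hAB (j + t - N) j (by omega) hjm hjN this


/-- gluing two 4-locally self-avoiding Eulerian trails across a 2-edge-cut.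
The vertex set is partitioned into `VA` and `VB`, and `E(G) = EA ∪ EB ∪ {xs₀, yt}` where
edges of `EA` (resp. `EB`) lie in `VA` (resp. `VB`).  If the subgraph with edge set `EA`
has a 4-locally self-avoiding Eulerian trail `P` from `x` to `y` of length ≥ 3 and the
subgraph with edge set `EB` has one, `Q`, from `t` to `s₀` of length ≥ 3, then the closed
walk `x P y, yt, t Q s₀, s₀x` (characterised by its support `P.support ++ Q.support ++ [x]`)
is a 4-locally self-avoiding Eulerian circuit of `G`. -/
theorem glue_across_two_edge_cut {V : Type} [Fintype V]
    (G : SimpleGraph V) (VA VB : Set V)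
    (hVcover : VA ∪ VB = Set.univ) (hVdisj : Disjoint VA VB)
    (EA EB : Set (Sym2 V)) (x y s₀ t : V)
    (hxy : x ≠ y) (hst : s₀ ≠ t)
    (hxA : x ∈ VA) (hyA : y ∈ VA) (hsB : s₀ ∈ VB) (htB : t ∈ VB)
    (hE : G.edgeSet = EA ∪ EB ∪ {s(x, s₀), s(y, t)})
    (hEdisj : Disjoint EA EB)
    (hcut1 : s(x, s₀) ∉ EA ∪ EB) (hcut2 : s(y, t) ∉ EA ∪ EB)
    (hcut3 : s(x, s₀) ≠ s(y, t))
    (hAin : ∀ e ∈ EA, ∀ v ∈ e, v ∈ VA) (hBin : ∀ e ∈ EB, ∀ v ∈ e, v ∈ VB)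
    (P : (SimpleGraph.fromEdgeSet EA).Walk x y)
    (hP : IsEulerianTrail P) (hPl : TrailLSA4 P) (hPlen : 3 ≤ P.length)
    (Q : (SimpleGraph.fromEdgeSet EB).Walk t s₀)
    (hQ : IsEulerianTrail Q) (hQl : TrailLSA4 Q) (hQlen : 3 ≤ Q.length) :
    ∃ W : G.Walk x x, W.support = P.support ++ Q.support ++ [x] ∧
      IsEulerianTrail W ∧ CircuitLSA4 W := by
  -- edges of P lie in EA, edges of Q in EB
  have hPsub : ∀ e ∈ P.edges, e ∈ EA := by
    intro e he
    have := P.edges_subset_edgeSet he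
    rw [SimpleGraph.edgeSet_fromEdgeSet] at this
    exact this.1
  have hQsub : ∀ e ∈ Q.edges, e ∈ EB := by
    intro e he
    have := Q.edges_subset_edgeSet he
    rw [SimpleGraph.edgeSet_fromEdgeSet] at this
    exact this.1
  have hPG : ∀ e ∈ P.edges, e ∈ G.edgeSet := by
    intro e he; rw [hE]; exact Or.inl (Or.inl (hPsub e he))
  have hQG : ∀ e ∈ Q.edges, e ∈ G.edgeSet := by
    intro e he; rw [hE]; exact Or.inl (Or.inr (hQsub e he))
  have hyt : G.Adj y t := by
    rw [← SimpleGraph.mem_edgeSet, hE]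
    exact Or.inr (by right; rfl)
  have hsx : G.Adj s₀ x := by
    rw [← SimpleGraph.mem_edgeSet, hE, Sym2.eq_swap]
    exact Or.inr (by left; rfl)
  set P' : G.Walk x y := P.transfer G hPG with hP'
  set Q' : G.Walk t s₀ := Q.transfer G hQG with hQ'
  set W : G.Walk x x :=
    P'.append (SimpleGraph.Walk.cons hyt (Q'.append (SimpleGraph.Walk.cons hsx SimpleGraph.Walk.nil))) with hW
  have hsupp : W.support = P.support ++ Q.support ++ [x] := by
    rw [hW, SimpleGraph.Walk.support_append, SimpleGraph.Walk.support_cons,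
      SimpleGraph.Walk.support_append, SimpleGraph.Walk.support_cons,
      SimpleGraph.Walk.support_nil, hP', hQ',
      SimpleGraph.Walk.support_transfer, SimpleGraph.Walk.support_transfer]
    simp [List.append_assoc]
  have hedges : W.edges = P.edges ++ (s(y, t) :: (Q.edges ++ [s(s₀, x)])) := by
    rw [hW, SimpleGraph.Walk.edges_append, SimpleGraph.Walk.edges_cons,
      SimpleGraph.Walk.edges_append, SimpleGraph.Walk.edges_cons,
      SimpleGraph.Walk.edges_nil, hP', hQ',
      SimpleGraph.Walk.edges_transfer, SimpleGraph.Walk.edges_transfer]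
  refine ⟨W, hsupp, ⟨?_, ?_⟩, ?_⟩
  · -- trail
    rw [SimpleGraph.Walk.isTrail_def, hedges]
    have hytP : s(y, t) ∉ P.edges := fun h => hcut2 (Or.inl (hPsub _ h))
    have hytQ : s(y, t) ∉ Q.edges := fun h => hcut2 (Or.inr (hQsub _ h))
    have hsxP : s(s₀, x) ∉ P.edges := fun h => hcut1 (Or.inl (hPsub _ (Sym2.eq_swap ▸ h)))
    have hsxQ : s(s₀, x) ∉ Q.edges := fun h => hcut1 (Or.inr (hQsub _ (Sym2.eq_swap ▸ h)))
    have hne : s(y, t) ≠ s(s₀, x) := by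
      intro h; exact hcut3 (by rw [Sym2.eq_swap (a := s₀)] at h; exact h.symm)
    have hPQ : ∀ e ∈ P.edges, e ∉ Q.edges := by
      intro e heP heQ
      exact hEdisj.le_bot ⟨hPsub _ heP, hQsub _ heQ⟩
    rw [List.nodup_append]
    refine ⟨hP.1.edges_nodup, ?_, ?_⟩
    · rw [List.nodup_cons, List.nodup_append]
      refine ⟨?_, hQ.1.edges_nodup, List.nodup_singleton _, ?_⟩
      · intro h
        rcases List.mem_append.mp h with h | h
        · exact hytQ h
        · exact hne (List.mem_singleton.mp h)
      · intro e he
        simp only [List.mem_singleton]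
        intro h hh hEq; subst hh
        exact hsxQ (hEq ▸ he)
    · intro e he b hmem hEq; subst hEq
      rcases List.mem_cons.mp hmem with h | h
      · exact hytP (h ▸ he)
      · rcases List.mem_append.mp h with h | h
        · exact hPQ _ he h
        · exact hsxP ((List.mem_singleton.mp h) ▸ he)
  · -- eulerian
    intro e
    rw [hedges]
    constructor
    · intro he
      have hnd : ¬ e.IsDiag := G.not_isDiag_of_mem_edgeSet he
      rw [hE] at he
      rcases he with (he | he) | he
      · exact List.mem_append.mpr (Or.inl ((hP.2 e).mp (by
          rw [SimpleGraph.edgeSet_fromEdgeSet]; exact ⟨he, hnd⟩)))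
      · refine List.mem_append.mpr (Or.inr (List.mem_cons.mpr (Or.inr
          (List.mem_append.mpr (Or.inl ((hQ.2 e).mp (by
            rw [SimpleGraph.edgeSet_fromEdgeSet]; exact ⟨he, hnd⟩)))))))
      · rcases he with he | he
        · refine List.mem_append.mpr (Or.inr (List.mem_cons.mpr (Or.inr
            (List.mem_append.mpr (Or.inr ?_)))))
          rw [List.mem_singleton, show e = s(x, s₀) from he]
          exact Sym2.eq_swap
        · rw [Set.mem_singleton_iff] at he
          exact List.mem_append.mpr (Or.inr (List.mem_cons.mpr (Or.inl he)))
    · intro he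
      rw [← hedges] at he
      exact W.edges_subset_edgeSet he
  · -- LSA4
    have hdl : W.support.dropLast = P.support ++ Q.support := by
      rw [hsupp, List.dropLast_concat]
    rw [CircuitLSA4, hdl]
    have hlA : 4 ≤ P.support.length := by
      rw [SimpleGraph.Walk.length_support]; omega
    have hlB : 4 ≤ Q.support.length := by
      rw [SimpleGraph.Walk.length_support]; omega
    exact no_cyclic_of_parts hVdisj P.support Q.support
      (walk_support_subset hAin P hxA) (walk_support_subset hBin Q htB)
      hlA hlB hPl hQl

end Quartic
end
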